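/- Uniform-in-time stability of the full discretization dG(q)–cG(r) for q ∈ {0,1} with vanishing initial data. Let q ∈ {0,1} and l ∈ ℝ. There is a constant C > 0, independent of T, N, the mesh and h, such that if U = (U₁,U₂) ∈ 𝒱_{h,q} satisfies B(U,V) = Σ_{n=1}^N ∫_{I_n} ( a(f₁,V₁) + (f₂,V₂) ) dt for all V ∈ 𝒱_{h,q} (the generalized discrete problem with u_{h,0} = 0, v_{h,0} = 0), then sup_{t∈(0,T)} ‖U₁(t)‖_{h,l+1} + sup_{t∈(0,T)} ‖U₂(t)‖_{h,l} ≤ C ∫₀^T ( ‖R_h f₁(t)‖_{h,l+1} + ‖P_h f₂(t)‖_{h,l} ) dt. -/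

import Mathlib

noncomputable section

open scoped RealInnerProductSpace BigOperators
open MeasureTheory

/-- Squared fractional-order norm `‖v‖_α² = Σ_k λ_k^α (v,φ_k)²`. -/
def hsNormSq {H : Type*} [NormedAddCommGroup H] [InnerProductSpace ℝ H]
    (φ : ℕ → H) (lam : ℕ → ℝ) (α : ℝ) (v : H) : ℝ :=
  ∑' k, lam k ^ α * ⟪v, φ k⟫ ^ 2

/-- Fractional-order norm `‖v‖_α`. -/
def hsNorm {H : Type*} [NormedAddCommGroup H] [InnerProductSpace ℝ H]
    (φ : ℕ → H) (lam : ℕ → ℝ) (α : ℝ) (v : H) : ℝ :=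
  Real.sqrt (hsNormSq φ lam α v)

/-- Membership in the fractional-order space `Ḣ^α`. -/
def MemHs {H : Type*} [NormedAddCommGroup H] [InnerProductSpace ℝ H]
    (φ : ℕ → H) (lam : ℕ → ℝ) (α : ℝ) (v : H) : Prop :=
  Summable (fun k => lam k ^ α * ⟪v, φ k⟫ ^ 2)

/-- Weighted spectral pairing `Σ_k λ_k^l (u,φ_k)(v,φ_k)`.
`aPow φ lam 1 u v = a(u,v)`, `aPow φ lam (l+1) u v = a(u, A^l v)` and
`aPow φ lam l u v = (u, A^l v)`. -/
def aPow {H : Type*} [NormedAddCommGroup H] [InnerProductSpace ℝ H]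
    (φ : ℕ → H) (lam : ℕ → ℝ) (l : ℝ) (u v : H) : ℝ :=
  ∑' k, lam k ^ l * ⟪u, φ k⟫ * ⟪v, φ k⟫

/-- The energy bilinear form `a(u,v) = Σ_k λ_k (u,φ_k)(v,φ_k)`. -/
def aForm {H : Type*} [NormedAddCommGroup H] [InnerProductSpace ℝ H]
    (φ : ℕ → H) (lam : ℕ → ℝ) (u v : H) : ℝ :=
  aPow φ lam 1 u v

/-- The operator `A`, determined by `A φ_k = λ_k φ_k`. -/
def Aop {H : Type*} [NormedAddCommGroup H] [InnerProductSpace ℝ H]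
    (φ : ℕ → H) (lam : ℕ → ℝ) (v : H) : H :=
  ∑' k, (lam k * ⟪v, φ k⟫) • φ k

/-- Value at time `s` of the polynomial of degree ≤ q (with coefficients `c n ·`)
attached to the `n`-th time subinterval. -/
def pval {H : Type*} [NormedAddCommGroup H] [InnerProductSpace ℝ H]
    (q : ℕ) (c : ℕ → ℕ → H) (n : ℕ) (s : ℝ) : H :=
  ∑ j ∈ Finset.range (q + 1), s ^ j • c n j

/-- Time derivative of `pval`. -/
def pderiv {H : Type*} [NormedAddCommGroup H] [InnerProductSpace ℝ H]
    (q : ℕ) (c : ℕ → ℕ → H) (n : ℕ) (s : ℝ) : H :=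
  ∑ j ∈ Finset.range (q + 1), ((j : ℝ) * s ^ (j - 1)) • c n j

/-- The dG bilinear form `B((u₁,u₂),(v₁,v₂))`, where the piecewise polynomials
`u₁, u₂, v₁, v₂` are described by their coefficient families `c1, c2, d1, d2`
(on the mesh `0 = tt 0 < tt 1 < ⋯ < tt N`). -/
def Bform {H : Type*} [NormedAddCommGroup H] [InnerProductSpace ℝ H]
    (φ : ℕ → H) (lam : ℕ → ℝ) (tt : ℕ → ℝ) (N q : ℕ)
    (c1 c2 d1 d2 : ℕ → ℕ → H) : ℝ :=
  (∑ n ∈ Finset.Icc 1 N, ∫ s in tt (n-1)..tt n,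
      (aForm φ lam (pderiv q c1 n s) (pval q d1 n s)
        - aForm φ lam (pval q c2 n s) (pval q d1 n s)
        + ⟪pderiv q c2 n s, pval q d2 n s⟫
        + aForm φ lam (pval q c1 n s) (pval q d2 n s)))
  + (∑ n ∈ Finset.Icc 1 (N-1),
      (aForm φ lam (pval q c1 (n+1) (tt n) - pval q c1 n (tt n)) (pval q d1 (n+1) (tt n))
        + ⟪pval q c2 (n+1) (tt n) - pval q c2 n (tt n), pval q d2 (n+1) (tt n)⟫))
  + aForm φ lam (pval q c1 1 (tt 0)) (pval q d1 1 (tt 0))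
  + ⟪pval q c2 1 (tt 0), pval q d2 1 (tt 0)⟫

/-- Supremum of `g` over the open interval `(a,b)`. -/
def supIoo (g : ℝ → ℝ) (a b : ℝ) : ℝ :=
  sSup (g '' Set.Ioo a b)

/-- Squared discrete fractional norm `‖v‖_{h,s}² = ‖A_h^{s/2} v‖²`, expressed through
an orthonormal eigenbasis `e` of `A_h` on `S_h` with eigenvalues `μ`. -/
def hNormSqh {H : Type*} [NormedAddCommGroup H] [InnerProductSpace ℝ H]
    {m : ℕ} (e : Fin m → H) (μ : Fin m → ℝ) (s : ℝ) (v : H) : ℝ :=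
  ∑ i, μ i ^ s * ⟪v, e i⟫ ^ 2

/-- Discrete fractional norm `‖v‖_{h,s}`. -/
def hNormh {H : Type*} [NormedAddCommGroup H] [InnerProductSpace ℝ H]
    {m : ℕ} (e : Fin m → H) (μ : Fin m → ℝ) (s : ℝ) (v : H) : ℝ :=
  Real.sqrt (hNormSqh e μ s v)

/-- Discrete weighted pairing: `aPowh e μ (l+1) u v = a(u, A_h^l v)` and
`aPowh e μ l u v = (u, A_h^l v)` for `u, v ∈ S_h`. -/
def aPowh {H : Type*} [NormedAddCommGroup H] [InnerProductSpace ℝ H]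
    {m : ℕ} (e : Fin m → H) (μ : Fin m → ℝ) (l : ℝ) (u v : H) : ℝ :=
  ∑ i, μ i ^ l * ⟪u, e i⟫ * ⟪v, e i⟫


/-- scalar polynomial value -/
def sp (q : ℕ) (X : ℕ → ℝ) (s : ℝ) : ℝ := ∑ j ∈ Finset.range (q + 1), s ^ j * X j
/-- scalar polynomial derivative -/
def spd (q : ℕ) (X : ℕ → ℝ) (s : ℝ) : ℝ := ∑ j ∈ Finset.range (q + 1), ((j : ℝ) * s ^ (j - 1)) * X j

lemma sp_hasDerivAt (q : ℕ) (X : ℕ → ℝ) (s : ℝ) : HasDerivAt (sp q X) (spd q X s) s := by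
  unfold sp spd
  exact HasDerivAt.fun_sum fun j _ => (hasDerivAt_pow j s).mul_const (X j)

lemma sp_continuous (q : ℕ) (X : ℕ → ℝ) : Continuous (sp q X) :=
  continuous_finset_sum _ fun j _ => (continuous_pow j).mul continuous_const

lemma spd_continuous (q : ℕ) (X : ℕ → ℝ) : Continuous (spd q X) :=
  continuous_finset_sum _ fun j _ =>
    (continuous_const.mul (continuous_pow (j - 1))).mul continuous_const

lemma integral_spd_mul_sp (q : ℕ) (X : ℕ → ℝ) (a b : ℝ) :
    ∫ s in a..b, spd q X s * sp q X s = sp q X b ^ 2 / 2 - sp q X a ^ 2 / 2 := by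
  have h : ∀ t ∈ Set.uIcc a b, HasDerivAt (fun s => sp q X s ^ 2 / 2) (spd q X t * sp q X t) t := by
    intro t _
    have := ((sp_hasDerivAt q X t).mul (sp_hasDerivAt q X t)).div_const 2
    have h2 : (spd q X t * sp q X t + sp q X t * spd q X t) / 2 = spd q X t * sp q X t := by ring
    simpa [h2, pow_two] using this
  exact intervalIntegral.integral_eq_sub_of_hasDerivAt h
    (((spd_continuous q X).mul (sp_continuous q X)).intervalIntegrable a b)

lemma sqrt_sum_sq_le' {ι : Type*} (s : Finset ι) (f : ι → ℝ) :
    Real.sqrt (∑ i ∈ s, f i ^ 2) ≤ ∑ i ∈ s, |f i| := by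
  have h1 : ∑ i ∈ s, f i ^ 2 ≤ (∑ i ∈ s, |f i|) ^ 2 := by
    have := Finset.sum_sq_le_sq_sum_of_nonneg (f := fun i => |f i|) (s := s)
      (fun i _ => abs_nonneg _)
    simpa [sq_abs] using this
  calc Real.sqrt (∑ i ∈ s, f i ^ 2) ≤ Real.sqrt ((∑ i ∈ s, |f i|) ^ 2) := Real.sqrt_le_sqrt h1
  _ = ∑ i ∈ s, |f i| := Real.sqrt_sq (Finset.sum_nonneg fun i _ => abs_nonneg _)

/-- weighted Cauchy-Schwarz -/
lemma weighted_cs {ι : Type*} (s : Finset ι) (w a b : ι → ℝ) (hw : ∀ i ∈ s, 0 ≤ w i) :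
    ∑ i ∈ s, w i * a i * b i ≤
      Real.sqrt (∑ i ∈ s, w i * a i ^ 2) * Real.sqrt (∑ i ∈ s, w i * b i ^ 2) := by
  have key : (∑ i ∈ s, w i * a i * b i) ^ 2 ≤
      (∑ i ∈ s, w i * a i ^ 2) * (∑ i ∈ s, w i * b i ^ 2) := by
    have h := Finset.sum_mul_sq_le_sq_mul_sq s (fun i => Real.sqrt (w i) * a i)
      (fun i => Real.sqrt (w i) * b i)
    have e1 : ∀ i ∈ s, Real.sqrt (w i) * a i * (Real.sqrt (w i) * b i) = w i * a i * b i := by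
      intro i hi
      have : Real.sqrt (w i) * Real.sqrt (w i) = w i := Real.mul_self_sqrt (hw i hi)
      ring_nf
      rw [Real.sq_sqrt (hw i hi)]; ring
    have e2 : ∀ i ∈ s, (Real.sqrt (w i) * a i) ^ 2 = w i * a i ^ 2 := by
      intro i hi; rw [mul_pow, Real.sq_sqrt (hw i hi)]
    have e3 : ∀ i ∈ s, (Real.sqrt (w i) * b i) ^ 2 = w i * b i ^ 2 := by
      intro i hi; rw [mul_pow, Real.sq_sqrt (hw i hi)]
    rw [Finset.sum_congr rfl e1, Finset.sum_congr rfl e2, Finset.sum_congr rfl e3] at h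
    exact h
  have h1 : ∑ i ∈ s, w i * a i * b i ≤ |∑ i ∈ s, w i * a i * b i| := le_abs_self _
  have h2 : |∑ i ∈ s, w i * a i * b i| = Real.sqrt ((∑ i ∈ s, w i * a i * b i) ^ 2) :=
    (Real.sqrt_sq_eq_abs _).symm
  calc ∑ i ∈ s, w i * a i * b i ≤ Real.sqrt ((∑ i ∈ s, w i * a i * b i) ^ 2) := h2 ▸ h1
  _ ≤ Real.sqrt ((∑ i ∈ s, w i * a i ^ 2) * (∑ i ∈ s, w i * b i ^ 2)) := Real.sqrt_le_sqrt key
  _ = _ := Real.sqrt_mul (Finset.sum_nonneg fun i hi => mul_nonneg (hw i hi) (sq_nonneg _)) _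

/-- doubled Minkowski -/
lemma minkowski_two {ι : Type*} (s : Finset ι) (w1 w2 a b c d : ι → ℝ)
    (hw1 : ∀ i ∈ s, 0 ≤ w1 i) (hw2 : ∀ i ∈ s, 0 ≤ w2 i) :
    Real.sqrt (∑ i ∈ s, (w1 i * (a i + b i) ^ 2 + w2 i * (c i + d i) ^ 2)) ≤
      Real.sqrt (∑ i ∈ s, (w1 i * a i ^ 2 + w2 i * c i ^ 2)) +
      Real.sqrt (∑ i ∈ s, (w1 i * b i ^ 2 + w2 i * d i ^ 2)) := by
  set P := ∑ i ∈ s, (w1 i * a i ^ 2 + w2 i * c i ^ 2) with hP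
  set Q := ∑ i ∈ s, (w1 i * b i ^ 2 + w2 i * d i ^ 2) with hQ
  have hPn : 0 ≤ P := Finset.sum_nonneg fun i hi =>
    add_nonneg (mul_nonneg (hw1 i hi) (sq_nonneg _)) (mul_nonneg (hw2 i hi) (sq_nonneg _))
  have hQn : 0 ≤ Q := Finset.sum_nonneg fun i hi =>
    add_nonneg (mul_nonneg (hw1 i hi) (sq_nonneg _)) (mul_nonneg (hw2 i hi) (sq_nonneg _))
  have hcross : ∑ i ∈ s, (w1 i * a i * b i + w2 i * c i * d i) ≤ Real.sqrt P * Real.sqrt Q := by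
    have h1 := weighted_cs s w1 a b hw1
    have h2 := weighted_cs s w2 c d hw2
    set X1 := Real.sqrt (∑ i ∈ s, w1 i * a i ^ 2)
    set Y1 := Real.sqrt (∑ i ∈ s, w1 i * b i ^ 2)
    set X2 := Real.sqrt (∑ i ∈ s, w2 i * c i ^ 2)
    set Y2 := Real.sqrt (∑ i ∈ s, w2 i * d i ^ 2)
    have hX1 : 0 ≤ X1 := Real.sqrt_nonneg _
    have hY1 : 0 ≤ Y1 := Real.sqrt_nonneg _
    have hX2 : 0 ≤ X2 := Real.sqrt_nonneg _
    have hY2 : 0 ≤ Y2 := Real.sqrt_nonneg _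
    have hsum : ∑ i ∈ s, (w1 i * a i * b i + w2 i * c i * d i) ≤ X1 * Y1 + X2 * Y2 := by
      rw [Finset.sum_add_distrib]; exact add_le_add h1 h2
    have h2d : X1 * Y1 + X2 * Y2 ≤ Real.sqrt P * Real.sqrt Q := by
      have hPs : P = X1 ^ 2 + X2 ^ 2 := by
        rw [hP, Finset.sum_add_distrib]
        simp only [X1, X2]
        rw [Real.sq_sqrt (Finset.sum_nonneg fun i hi => mul_nonneg (hw1 i hi) (sq_nonneg _)),
          Real.sq_sqrt (Finset.sum_nonneg fun i hi => mul_nonneg (hw2 i hi) (sq_nonneg _))]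
      have hQs : Q = Y1 ^ 2 + Y2 ^ 2 := by
        rw [hQ, Finset.sum_add_distrib]
        simp only [Y1, Y2]
        rw [Real.sq_sqrt (Finset.sum_nonneg fun i hi => mul_nonneg (hw1 i hi) (sq_nonneg _)),
          Real.sq_sqrt (Finset.sum_nonneg fun i hi => mul_nonneg (hw2 i hi) (sq_nonneg _))]
      have hprod : Real.sqrt P * Real.sqrt Q = Real.sqrt (P * Q) := (Real.sqrt_mul hPn _).symm
      rw [hprod]
      have hsq : (X1 * Y1 + X2 * Y2) ^ 2 ≤ P * Q := by
        rw [hPs, hQs]; nlinarith [sq_nonneg (X1 * Y2 - X2 * Y1)]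
      calc X1 * Y1 + X2 * Y2 = Real.sqrt ((X1 * Y1 + X2 * Y2) ^ 2) :=
            (Real.sqrt_sq (by positivity)).symm
      _ ≤ Real.sqrt (P * Q) := Real.sqrt_le_sqrt hsq
    exact hsum.trans h2d
  have hexp : ∑ i ∈ s, (w1 i * (a i + b i) ^ 2 + w2 i * (c i + d i) ^ 2) =
      P + 2 * ∑ i ∈ s, (w1 i * a i * b i + w2 i * c i * d i) + Q := by
    rw [hP, hQ]
    rw [Finset.mul_sum, ← Finset.sum_add_distrib, ← Finset.sum_add_distrib]
    exact Finset.sum_congr rfl fun i _ => by ring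
  rw [hexp]
  have : P + 2 * ∑ i ∈ s, (w1 i * a i * b i + w2 i * c i * d i) + Q ≤
      (Real.sqrt P + Real.sqrt Q) ^ 2 := by
    have := hcross
    nlinarith [Real.sq_sqrt hPn, Real.sq_sqrt hQn]
  calc Real.sqrt _ ≤ Real.sqrt ((Real.sqrt P + Real.sqrt Q) ^ 2) := Real.sqrt_le_sqrt this
  _ = _ := Real.sqrt_sq (by positivity)

/-- quadratic max lemma -/
lemma quad_le_max (α β γ a b t : ℝ) (hγ : 0 ≤ γ) (hat : a ≤ t) (htb : t ≤ b) :
    α + β * t + γ * t ^ 2 ≤ max (α + β * a + γ * a ^ 2) (α + β * b + γ * b ^ 2) := by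
  rcases le_or_gt (α + β * t + γ * t ^ 2) (α + β * a + γ * a ^ 2) with h | h
  · exact le_max_of_le_left h
  · apply le_max_of_le_right
    by_contra hb
    push_neg at hb
    rcases eq_or_lt_of_le hat with rfl | hat'
    · exact absurd h (lt_irrefl _)
    · have k2pos : 0 < (t - a) * ((β * t + γ * t ^ 2) - (β * b + γ * b ^ 2)) :=
        mul_pos (by linarith) (by linarith)
      have k1 : 0 ≤ (b - t) * ((β * t + γ * t ^ 2) - (β * a + γ * a ^ 2)) :=
        mul_nonneg (by linarith) (by linarith)
      have k3 : 0 ≤ γ * (t - a) * ((b - t) * (b - a)) :=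
        mul_nonneg (mul_nonneg hγ (by linarith)) (mul_nonneg (by linarith) (by linarith))
      nlinarith [k1, k2pos, k3]

/-- telescoping -/
lemma telescope_sum (fN fS : ℕ → ℝ) :
    ∀ M, 1 ≤ M →
      (∑ n ∈ Finset.Icc 1 M, (fN n - fS n)) + ∑ n ∈ Finset.Icc 1 (M - 1), (fS (n + 1) - fN n)
        = fN M - fS 1 := by
  intro M hM
  induction M, hM using Nat.le_induction with
  | base => simp
  | succ M hM ih =>
    obtain ⟨M', rfl⟩ : ∃ M', M = M' + 1 := ⟨M - 1, by omega⟩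
    have h2 : M' + 1 + 1 - 1 = M' + 1 := by omega
    have h3 : M' + 1 - 1 = M' := by omega
    rw [h3] at ih
    have e1 := Finset.sum_Icc_succ_top (show (1:ℕ) ≤ M' + 1 + 1 by omega)
      (f := fun n => fN n - fS n)
    have e2 := Finset.sum_Icc_succ_top (show (1:ℕ) ≤ M' + 1 by omega)
      (f := fun n => fS (n + 1) - fN n)
    rw [h2, e1, e2]
    linarith [ih]

lemma sum_Icc_one_eq_range (f : ℕ → ℝ) (M : ℕ) :
    ∑ n ∈ Finset.Icc 1 M, f n = ∑ k ∈ Finset.range M, f (k + 1) := by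
  induction M with
  | zero => simp
  | succ M ih => rw [Finset.sum_range_succ, ← ih, Finset.sum_Icc_succ_top (by omega)]
section aFormLemmas
variable {H : Type*} [NormedAddCommGroup H] [InnerProductSpace ℝ H]
  (φ : ℕ → H) (lam : ℕ → ℝ)

lemma memHs_summable {α : ℝ} {u : H} (hu : MemHs φ lam α u) :
    Summable (fun k => lam k ^ α * ⟪u, φ k⟫ ^ 2) := hu

lemma summable_abs_aterm (hlam : ∀ k, 0 ≤ lam k) {u v : H}
    (hu : MemHs φ lam 1 u) (hv : MemHs φ lam 1 v) :
    Summable (fun k => |lam k ^ (1:ℝ) * ⟪u, φ k⟫ * ⟪v, φ k⟫|) := by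
  have hu' : Summable (fun k => lam k ^ (1:ℝ) * ⟪u, φ k⟫ ^ 2) := hu
  have hv' : Summable (fun k => lam k ^ (1:ℝ) * ⟪v, φ k⟫ ^ 2) := hv
  have hg : Summable (fun k =>
      (lam k ^ (1:ℝ) * ⟪u, φ k⟫ ^ 2 + lam k ^ (1:ℝ) * ⟪v, φ k⟫ ^ 2) / 2) :=
    (hu'.add hv').div_const 2
  refine Summable.of_nonneg_of_le (fun k => abs_nonneg _) (fun k => ?_) hg
  have h0 : (0:ℝ) ≤ lam k ^ (1:ℝ) := Real.rpow_nonneg (hlam k) _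
  rw [abs_mul, abs_mul, abs_of_nonneg h0]
  nlinarith [sq_nonneg (|⟪u, φ k⟫| - |⟪v, φ k⟫|), abs_nonneg ⟪u, φ k⟫, abs_nonneg ⟪v, φ k⟫,
    sq_abs ⟪u, φ k⟫, sq_abs ⟪v, φ k⟫, h0,
    mul_nonneg h0 (sq_nonneg (|⟪u, φ k⟫| - |⟪v, φ k⟫|))]

lemma summable_aterm (hlam : ∀ k, 0 ≤ lam k) {u v : H}
    (hu : MemHs φ lam 1 u) (hv : MemHs φ lam 1 v) :
    Summable (fun k => lam k ^ (1:ℝ) * ⟪u, φ k⟫ * ⟪v, φ k⟫) :=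
  (summable_abs_aterm φ lam hlam hu hv).of_abs

lemma aForm_symm' (u v : H) : aForm φ lam u v = aForm φ lam v u := by
  unfold aForm aPow; exact tsum_congr fun k => by ring

lemma aForm_zero_right (u : H) : aForm φ lam u 0 = 0 := by
  unfold aForm aPow; simp

lemma aForm_sub_left (hlam : ∀ k, 0 ≤ lam k) {u w v : H}
    (hu : MemHs φ lam 1 u) (hw : MemHs φ lam 1 w) (hv : MemHs φ lam 1 v) :
    aForm φ lam (u - w) v = aForm φ lam u v - aForm φ lam w v := by
  unfold aForm aPow
  rw [← Summable.tsum_sub (summable_aterm φ lam hlam hu hv) (summable_aterm φ lam hlam hw hv)]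
  exact tsum_congr fun k => by rw [inner_sub_left]; ring

lemma aForm_add_left (hlam : ∀ k, 0 ≤ lam k) {u w v : H}
    (hu : MemHs φ lam 1 u) (hw : MemHs φ lam 1 w) (hv : MemHs φ lam 1 v) :
    aForm φ lam (u + w) v = aForm φ lam u v + aForm φ lam w v := by
  unfold aForm aPow
  rw [← Summable.tsum_add (summable_aterm φ lam hlam hu hv) (summable_aterm φ lam hlam hw hv)]
  exact tsum_congr fun k => by rw [inner_add_left]; ring

lemma aForm_smul_left (r : ℝ) (u v : H) :
    aForm φ lam (r • u) v = r * aForm φ lam u v := by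
  unfold aForm aPow
  rw [← tsum_mul_left]
  exact tsum_congr fun k => by rw [real_inner_smul_left]; ring

lemma MemHs_smul (r : ℝ) {u : H} (hu : MemHs φ lam 1 u) : MemHs φ lam 1 (r • u) := by
  have hu' : Summable (fun k => lam k ^ (1:ℝ) * ⟪u, φ k⟫ ^ 2) := hu
  have : (fun k => lam k ^ (1:ℝ) * ⟪r • u, φ k⟫ ^ 2) =
      fun k => r ^ 2 * (lam k ^ (1:ℝ) * ⟪u, φ k⟫ ^ 2) := by
    funext k; rw [real_inner_smul_left]; ring
  show Summable _
  rw [this]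
  exact hu'.mul_left _

lemma MemHs_add (hlam : ∀ k, 0 ≤ lam k) {u w : H}
    (hu : MemHs φ lam 1 u) (hw : MemHs φ lam 1 w) : MemHs φ lam 1 (u + w) := by
  have hu' : Summable (fun k => lam k ^ (1:ℝ) * ⟪u, φ k⟫ ^ 2) := hu
  have hw' : Summable (fun k => lam k ^ (1:ℝ) * ⟪w, φ k⟫ ^ 2) := hw
  have hg : Summable (fun k =>
      2 * (lam k ^ (1:ℝ) * ⟪u, φ k⟫ ^ 2) + 2 * (lam k ^ (1:ℝ) * ⟪w, φ k⟫ ^ 2)) :=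
    (hu'.mul_left 2).add (hw'.mul_left 2)
  show Summable _
  refine Summable.of_nonneg_of_le
    (fun k => mul_nonneg (Real.rpow_nonneg (hlam k) _) (sq_nonneg _)) (fun k => ?_) hg
  have h0 : (0:ℝ) ≤ lam k ^ (1:ℝ) := Real.rpow_nonneg (hlam k) _
  rw [inner_add_left]
  nlinarith [mul_nonneg h0 (sq_nonneg (⟪u, φ k⟫ - ⟪w, φ k⟫))]

lemma MemHs_sum (hlam : ∀ k, 0 ≤ lam k) {ι : Type*} (s : Finset ι) (f : ι → H)
    (hf : ∀ i ∈ s, MemHs φ lam 1 (f i)) : MemHs φ lam 1 (∑ i ∈ s, f i) := by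
  classical
  induction s using Finset.induction_on with
  | empty =>
    show Summable _
    simpa using summable_zero
  | @insert a s' hni ih =>
    rw [Finset.sum_insert hni]
    exact MemHs_add φ lam hlam (hf a (Finset.mem_insert_self a s'))
      (ih fun i hi => hf i (Finset.mem_insert_of_mem hi))

lemma aForm_sum_left (hlam : ∀ k, 0 ≤ lam k) {ι : Type*} (s : Finset ι) (f : ι → H) {v : H}
    (hf : ∀ i ∈ s, MemHs φ lam 1 (f i)) (hv : MemHs φ lam 1 v) :
    aForm φ lam (∑ i ∈ s, f i) v = ∑ i ∈ s, aForm φ lam (f i) v := by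
  classical
  induction s using Finset.induction_on with
  | empty => simp [aForm, aPow]
  | @insert a s' hni ih =>
    rw [Finset.sum_insert hni, Finset.sum_insert hni,
      aForm_add_left φ lam hlam (hf a (Finset.mem_insert_self a s'))
        (MemHs_sum φ lam hlam s' f fun i hi => hf i (Finset.mem_insert_of_mem hi)) hv,
      ih fun i hi => hf i (Finset.mem_insert_of_mem hi)]

lemma aForm_abs_le (hlam : ∀ k, 0 ≤ lam k) {u v : H}
    (hu : MemHs φ lam 1 u) (hv : MemHs φ lam 1 v) :
    |aForm φ lam u v| ≤ hsNorm φ lam 1 u * hsNorm φ lam 1 v := by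
  have hu' : Summable (fun k => lam k ^ (1:ℝ) * ⟪u, φ k⟫ ^ 2) := hu
  have hv' : Summable (fun k => lam k ^ (1:ℝ) * ⟪v, φ k⟫ ^ 2) := hv
  unfold aForm aPow hsNorm hsNormSq
  have habs := summable_abs_aterm φ lam hlam hu hv
  have h1 : |∑' k, lam k ^ (1:ℝ) * ⟪u, φ k⟫ * ⟪v, φ k⟫| ≤
      ∑' k, |lam k ^ (1:ℝ) * ⟪u, φ k⟫ * ⟪v, φ k⟫| := by
    have := norm_tsum_le_tsum_norm (f := fun k => lam k ^ (1:ℝ) * ⟪u, φ k⟫ * ⟪v, φ k⟫)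
      (by simpa only [Real.norm_eq_abs] using habs)
    simpa only [Real.norm_eq_abs] using this
  refine h1.trans ?_
  apply Summable.tsum_le_of_sum_le habs
  intro F
  have hF : ∑ k ∈ F, |lam k ^ (1:ℝ) * ⟪u, φ k⟫ * ⟪v, φ k⟫| =
      ∑ k ∈ F, lam k ^ (1:ℝ) * |⟪u, φ k⟫| * |⟪v, φ k⟫| := by
    refine Finset.sum_congr rfl fun k _ => ?_
    rw [abs_mul, abs_mul, abs_of_nonneg (Real.rpow_nonneg (hlam k) _)]
  rw [hF]
  have hcs := weighted_cs F (fun k => lam k ^ (1:ℝ)) (fun k => |⟪u, φ k⟫|) (fun k => |⟪v, φ k⟫|)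
    (fun k _ => Real.rpow_nonneg (hlam k) _)
  refine hcs.trans ?_
  have hle1 : ∑ k ∈ F, lam k ^ (1:ℝ) * |⟪u, φ k⟫| ^ 2 ≤ ∑' k, lam k ^ (1:ℝ) * ⟪u, φ k⟫ ^ 2 := by
    simp only [sq_abs]
    exact Summable.sum_le_tsum F (fun k _ =>
      mul_nonneg (Real.rpow_nonneg (hlam k) _) (sq_nonneg _)) hu'
  have hle2 : ∑ k ∈ F, lam k ^ (1:ℝ) * |⟪v, φ k⟫| ^ 2 ≤ ∑' k, lam k ^ (1:ℝ) * ⟪v, φ k⟫ ^ 2 := by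
    simp only [sq_abs]
    exact Summable.sum_le_tsum F (fun k _ =>
      mul_nonneg (Real.rpow_nonneg (hlam k) _) (sq_nonneg _)) hv'
  exact mul_le_mul (Real.sqrt_le_sqrt hle1) (Real.sqrt_le_sqrt hle2)
    (Real.sqrt_nonneg _) (Real.sqrt_nonneg _)

end aFormLemmas
section KeyIdentity
variable {H : Type*} [NormedAddCommGroup H] [InnerProductSpace ℝ H]

/-- scalar coefficient polynomial of a piecewise polynomial w.r.t. basis vector `e i` -/
def coefP {m : ℕ} (q : ℕ) (e : Fin m → H) (c : ℕ → ℕ → H) (i : Fin m) (n : ℕ) (s : ℝ) : ℝ :=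
  sp q (fun j => ⟪c n j, e i⟫) s

def coefPd {m : ℕ} (q : ℕ) (e : Fin m → H) (c : ℕ → ℕ → H) (i : Fin m) (n : ℕ) (s : ℝ) : ℝ :=
  spd q (fun j => ⟪c n j, e i⟫) s

def nodeSq {m : ℕ} (q : ℕ) (e : Fin m → H) (μ : Fin m → ℝ) (l : ℝ)
    (c1 c2 : ℕ → ℕ → H) (n : ℕ) (t : ℝ) : ℝ :=
  ∑ i, (μ i ^ (l+1) * (coefP q e c1 i n t) ^ 2 + μ i ^ l * (coefP q e c2 i n t) ^ 2)

def jumpSq {m : ℕ} (q : ℕ) (e : Fin m → H) (μ : Fin m → ℝ) (l : ℝ)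
    (c1 c2 : ℕ → ℕ → H) (n : ℕ) (t : ℝ) : ℝ :=
  ∑ i, (μ i ^ (l+1) * (coefP q e c1 i (n+1) t - coefP q e c1 i n t) ^ 2
    + μ i ^ l * (coefP q e c2 i (n+1) t - coefP q e c2 i n t) ^ 2)

def Gfun {m : ℕ} (q : ℕ) (e : Fin m → H) (μ : Fin m → ℝ) (l : ℝ)
    (r1 r2 : ℝ → H) (c1 c2 : ℕ → ℕ → H) (n : ℕ) (s : ℝ) : ℝ :=
  ∑ i, (μ i ^ (l+1) * (⟪r1 s, e i⟫ * coefP q e c1 i n s)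
    + μ i ^ l * (⟪r2 s, e i⟫ * coefP q e c2 i n s))

lemma coefP_continuous {m : ℕ} (q : ℕ) (e : Fin m → H) (c : ℕ → ℕ → H) (i : Fin m) (n : ℕ) :
    Continuous (coefP q e c i n) := sp_continuous _ _

lemma coefPd_continuous {m : ℕ} (q : ℕ) (e : Fin m → H) (c : ℕ → ℕ → H) (i : Fin m) (n : ℕ) :
    Continuous (coefPd q e c i n) := spd_continuous _ _

lemma key_identity
    (φ : ℕ → H) (lam : ℕ → ℝ) (hlam : ∀ k, 0 ≤ lam k)
    (q : ℕ) (l : ℝ) (N : ℕ) (tt : ℕ → ℝ)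
    (S : Submodule ℝ H) (hS1 : ∀ v ∈ S, MemHs φ lam 1 v)
    (m : ℕ) (e : Fin m → H) (μ : Fin m → ℝ)
    (he : Orthonormal ℝ e) (heS : ∀ i, e i ∈ S)
    (hμ : ∀ i, 0 < μ i)
    (heig : ∀ i, ∀ w ∈ S, aForm φ lam (e i) w = μ i * ⟪e i, w⟫)
    (Rh Ph : H → H) (hRhS : ∀ v, Rh v ∈ S)
    (hRitz : ∀ v, MemHs φ lam 1 v → ∀ χ ∈ S, aForm φ lam (Rh v - v) χ = 0)
    (hPh : ∀ v, ∀ χ ∈ S, ⟪Ph v - v, χ⟫ = 0)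
    (f1 f2 : ℝ → H) (hf1H : ∀ t, MemHs φ lam 1 (f1 t))
    (c1 c2 : ℕ → ℕ → H) (hc1S : ∀ n j, c1 n j ∈ S) (hc2S : ∀ n j, c2 n j ∈ S)
    (heq : ∀ d1 d2 : ℕ → ℕ → H, (∀ n j, d1 n j ∈ S) → (∀ n j, d2 n j ∈ S) →
      Bform φ lam tt N q c1 c2 d1 d2 =
        ∑ n ∈ Finset.Icc 1 N, ∫ s in tt (n-1)..tt n,
          (aForm φ lam (f1 s) (pval q d1 n s) + ⟪f2 s, pval q d2 n s⟫))
    (M : ℕ) (hM1 : 1 ≤ M) (hMN : M ≤ N) :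
    nodeSq q e μ l c1 c2 M (tt M) / 2
      + (∑ n ∈ Finset.Icc 1 (M-1), jumpSq q e μ l c1 c2 n (tt n)) / 2
      + nodeSq q e μ l c1 c2 1 (tt 0) / 2
    = ∑ n ∈ Finset.Icc 1 M, ∫ s in tt (n-1)..tt n,
        Gfun q e μ l (fun t => Rh (f1 t)) (fun t => Ph (f2 t)) c1 c2 n s := by
  classical
  -- generic facts about the basis
  have heH : ∀ i, MemHs φ lam 1 (e i) := fun i => hS1 _ (heS i)
  have hSw : ∀ w : Fin m → ℝ, (∑ i, w i • e i) ∈ S := fun w =>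
    Submodule.sum_mem _ fun i _ => Submodule.smul_mem _ _ (heS i)
  have hmulpow : ∀ i, μ i * μ i ^ l = μ i ^ (l+1) := by
    intro i
    rw [Real.rpow_add (hμ i), Real.rpow_one]
    ring
  have hinner_wsum : ∀ (u : H) (w : Fin m → ℝ),
      ⟪u, ∑ i, w i • e i⟫ = ∑ i, w i * ⟪u, e i⟫ := by
    intro u w
    rw [inner_sum]
    exact Finset.sum_congr rfl fun i _ => by rw [real_inner_smul_right]
  have haF : ∀ u, MemHs φ lam 1 u → ∀ w : Fin m → ℝ,
      aForm φ lam u (∑ i, w i • e i) = ∑ i, w i * aForm φ lam u (e i) := by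
    intro u hu w
    rw [aForm_symm', aForm_sum_left φ lam hlam Finset.univ (fun i => w i • e i)
      (fun i _ => MemHs_smul φ lam (w i) (heH i)) hu]
    exact Finset.sum_congr rfl fun i _ => by
      rw [aForm_smul_left, aForm_symm']
  have haSe : ∀ u ∈ S, ∀ i, aForm φ lam u (e i) = μ i * ⟪u, e i⟫ := by
    intro u hu i
    rw [aForm_symm', heig i u hu, real_inner_comm]
  have hf1e : ∀ s i, aForm φ lam (f1 s) (e i) = μ i * ⟪Rh (f1 s), e i⟫ := by
    intro s i
    have h0 := hRitz (f1 s) (hf1H s) (e i) (heS i)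
    rw [aForm_sub_left φ lam hlam (hS1 _ (hRhS (f1 s))) (hf1H s) (heH i)] at h0
    have : aForm φ lam (f1 s) (e i) = aForm φ lam (Rh (f1 s)) (e i) := by linarith
    rw [this, haSe _ (hRhS (f1 s)) i]
  have hf2e : ∀ s i, ⟪f2 s, e i⟫ = ⟪Ph (f2 s), e i⟫ := by
    intro s i
    have h0 := hPh (f2 s) (e i) (heS i)
    rw [inner_sub_left] at h0
    linarith
  -- pval facts
  have hpvc : ∀ (c : ℕ → ℕ → H) n s i, ⟪pval q c n s, e i⟫ = coefP q e c i n s := by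
    intro c n s i
    unfold pval coefP sp
    rw [sum_inner]
    exact Finset.sum_congr rfl fun j _ => by rw [real_inner_smul_left]
  have hpdc : ∀ (c : ℕ → ℕ → H) n s i, ⟪pderiv q c n s, e i⟫ = coefPd q e c i n s := by
    intro c n s i
    unfold pderiv coefPd spd
    rw [sum_inner]
    exact Finset.sum_congr rfl fun j _ => by rw [real_inner_smul_left]
  have hpvS : ∀ (c : ℕ → ℕ → H), (∀ n j, c n j ∈ S) → ∀ n s, pval q c n s ∈ S :=
    fun c hc n s => Submodule.sum_mem _ fun j _ => Submodule.smul_mem _ _ (hc n j)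
  have hpdS : ∀ (c : ℕ → ℕ → H), (∀ n j, c n j ∈ S) → ∀ n s, pderiv q c n s ∈ S :=
    fun c hc n s => Submodule.sum_mem _ fun j _ => Submodule.smul_mem _ _ (hc n j)
  -- test functions
  set d1 : ℕ → ℕ → H := fun n j =>
    if n ≤ M then ∑ i, (μ i ^ l * ⟪c1 n j, e i⟫) • e i else 0 with hd1def
  set d2 : ℕ → ℕ → H := fun n j =>
    if n ≤ M then ∑ i, (μ i ^ l * ⟪c2 n j, e i⟫) • e i else 0 with hd2def
  have hd1S : ∀ n j, d1 n j ∈ S := by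
    intro n j; by_cases h : n ≤ M
    · simp only [hd1def, if_pos h]; exact hSw _
    · simp only [hd1def, if_neg h]; exact Submodule.zero_mem _
  have hd2S : ∀ n j, d2 n j ∈ S := by
    intro n j; by_cases h : n ≤ M
    · simp only [hd2def, if_pos h]; exact hSw _
    · simp only [hd2def, if_neg h]; exact Submodule.zero_mem _
  -- values of the test functions
  have hpvd : ∀ (c : ℕ → ℕ → H) (dd : ℕ → ℕ → H),
      (dd = fun n j => if n ≤ M then ∑ i, (μ i ^ l * ⟪c n j, e i⟫) • e i else 0) →
      ∀ n s, n ≤ M → pval q dd n s = ∑ i, (μ i ^ l * coefP q e c i n s) • e i := by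
    intro c dd hdd n s hn
    subst hdd
    unfold pval
    simp only [if_pos hn]
    calc ∑ j ∈ Finset.range (q+1), s ^ j • ∑ i, (μ i ^ l * ⟪c n j, e i⟫) • e i
        = ∑ j ∈ Finset.range (q+1), ∑ i, (s ^ j * (μ i ^ l * ⟪c n j, e i⟫)) • e i := by
          refine Finset.sum_congr rfl fun j _ => ?_
          rw [Finset.smul_sum]
          exact Finset.sum_congr rfl fun i _ => (smul_smul _ _ _)
      _ = ∑ i, ∑ j ∈ Finset.range (q+1), (s ^ j * (μ i ^ l * ⟪c n j, e i⟫)) • e i :=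
          Finset.sum_comm
      _ = ∑ i, (μ i ^ l * coefP q e c i n s) • e i := by
          refine Finset.sum_congr rfl fun i _ => ?_
          rw [← Finset.sum_smul]
          congr 1
          unfold coefP sp
          rw [Finset.mul_sum]
          exact Finset.sum_congr rfl fun j _ => by ring
  have hpvd1 : ∀ n s, n ≤ M → pval q d1 n s = ∑ i, (μ i ^ l * coefP q e c1 i n s) • e i :=
    hpvd c1 d1 hd1def
  have hpvd2 : ∀ n s, n ≤ M → pval q d2 n s = ∑ i, (μ i ^ l * coefP q e c2 i n s) • e i :=
    hpvd c2 d2 hd2def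
  have hpvd10 : ∀ n s, M < n → pval q d1 n s = 0 := by
    intro n s hn
    unfold pval
    simp only [hd1def, if_neg (Nat.not_le.2 hn), smul_zero, Finset.sum_const_zero]
  have hpvd20 : ∀ n s, M < n → pval q d2 n s = 0 := by
    intro n s hn
    unfold pval
    simp only [hd2def, if_neg (Nat.not_le.2 hn), smul_zero, Finset.sum_const_zero]
  -- the tested equation
  have heqd := heq d1 d2 hd1S hd2S
  unfold Bform at heqd
  -- Group A : the integral terms of Bform
  have hsubA : Finset.Icc 1 M ⊆ Finset.Icc 1 N := Finset.Icc_subset_Icc_right hMN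
  have hA : (∑ n ∈ Finset.Icc 1 N, ∫ s in tt (n-1)..tt n,
      (aForm φ lam (pderiv q c1 n s) (pval q d1 n s)
        - aForm φ lam (pval q c2 n s) (pval q d1 n s)
        + ⟪pderiv q c2 n s, pval q d2 n s⟫
        + aForm φ lam (pval q c1 n s) (pval q d2 n s)))
      = ∑ n ∈ Finset.Icc 1 M,
          ((nodeSq q e μ l c1 c2 n (tt n) - nodeSq q e μ l c1 c2 n (tt (n-1))) / 2) := by
    rw [← Finset.sum_subset hsubA ?hvan]
    case hvan =>
      intro n hnN hnM
      have hMn : M < n := by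
        simp only [Finset.mem_Icc] at hnN hnM
        omega
      have hz : ∀ s : ℝ, (aForm φ lam (pderiv q c1 n s) (pval q d1 n s)
          - aForm φ lam (pval q c2 n s) (pval q d1 n s)
          + ⟪pderiv q c2 n s, pval q d2 n s⟫
          + aForm φ lam (pval q c1 n s) (pval q d2 n s)) = 0 := by
        intro s
        rw [hpvd10 n s hMn, hpvd20 n s hMn, aForm_zero_right, aForm_zero_right,
          aForm_zero_right, inner_zero_right]
        ring
      rw [intervalIntegral.integral_congr (g := fun _ => (0:ℝ)) (fun s _ => hz s)]
      simp
    refine Finset.sum_congr rfl fun n hn => ?_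
    have hnM : n ≤ M := (Finset.mem_Icc.1 hn).2
    have hint_eq : ∀ s : ℝ, (aForm φ lam (pderiv q c1 n s) (pval q d1 n s)
        - aForm φ lam (pval q c2 n s) (pval q d1 n s)
        + ⟪pderiv q c2 n s, pval q d2 n s⟫
        + aForm φ lam (pval q c1 n s) (pval q d2 n s))
        = ∑ i, (μ i ^ (l+1) * (coefPd q e c1 i n s * coefP q e c1 i n s)
            + μ i ^ l * (coefPd q e c2 i n s * coefP q e c2 i n s)) := by
      intro s
      rw [hpvd1 n s hnM, hpvd2 n s hnM,
        haF _ (hS1 _ (hpdS c1 hc1S n s)) _,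
        haF _ (hS1 _ (hpvS c2 hc2S n s)) _,
        haF _ (hS1 _ (hpvS c1 hc1S n s)) _,
        hinner_wsum]
      have e1 : ∀ i : Fin m, aForm φ lam (pderiv q c1 n s) (e i)
          = μ i * coefPd q e c1 i n s := fun i => by
        rw [haSe _ (hpdS c1 hc1S n s) i, hpdc]
      have e2 : ∀ i : Fin m, aForm φ lam (pval q c2 n s) (e i)
          = μ i * coefP q e c2 i n s := fun i => by
        rw [haSe _ (hpvS c2 hc2S n s) i, hpvc]
      have e3 : ∀ i : Fin m, aForm φ lam (pval q c1 n s) (e i)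
          = μ i * coefP q e c1 i n s := fun i => by
        rw [haSe _ (hpvS c1 hc1S n s) i, hpvc]
      simp only [e1, e2, e3, hpdc]
      rw [← Finset.sum_sub_distrib, ← Finset.sum_add_distrib, ← Finset.sum_add_distrib]
      refine Finset.sum_congr rfl fun i _ => ?_
      rw [← hmulpow i]
      ring
    rw [intervalIntegral.integral_congr (fun s _ => hint_eq s)]
    have hii : ∀ i : Fin m, IntervalIntegrable
        (fun s => μ i ^ (l+1) * (coefPd q e c1 i n s * coefP q e c1 i n s)
          + μ i ^ l * (coefPd q e c2 i n s * coefP q e c2 i n s))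
        MeasureTheory.volume (tt (n-1)) (tt n) := by
      intro i
      apply Continuous.intervalIntegrable
      exact (continuous_const.mul ((coefPd_continuous q e c1 i n).mul
        (coefP_continuous q e c1 i n))).add
        (continuous_const.mul ((coefPd_continuous q e c2 i n).mul
          (coefP_continuous q e c2 i n)))
    rw [intervalIntegral.integral_finset_sum (fun i _ => hii i)]
    have hterm : ∀ i : Fin m, (∫ s in tt (n-1)..tt n,
        (μ i ^ (l+1) * (coefPd q e c1 i n s * coefP q e c1 i n s)
          + μ i ^ l * (coefPd q e c2 i n s * coefP q e c2 i n s)))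
        = μ i ^ (l+1) * (coefP q e c1 i n (tt n) ^ 2 / 2 - coefP q e c1 i n (tt (n-1)) ^ 2 / 2)
          + μ i ^ l * (coefP q e c2 i n (tt n) ^ 2 / 2 - coefP q e c2 i n (tt (n-1)) ^ 2 / 2) := by
      intro i
      rw [intervalIntegral.integral_add
        ((Continuous.intervalIntegrable (u := fun s => μ i ^ (l+1) * (coefPd q e c1 i n s * coefP q e c1 i n s)) (continuous_const.mul
          ((coefPd_continuous q e c1 i n).mul (coefP_continuous q e c1 i n))) _ _))
        ((Continuous.intervalIntegrable (u := fun s => μ i ^ l * (coefPd q e c2 i n s * coefP q e c2 i n s)) (continuous_const.mul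
          ((coefPd_continuous q e c2 i n).mul (coefP_continuous q e c2 i n))) _ _)),
        intervalIntegral.integral_const_mul, intervalIntegral.integral_const_mul]
      unfold coefP coefPd
      rw [integral_spd_mul_sp, integral_spd_mul_sp]
    simp only [hterm]
    unfold nodeSq
    rw [← Finset.sum_sub_distrib, Finset.sum_div]
    exact Finset.sum_congr rfl fun i _ => by ring
  -- Group B : the jump terms
  have hsubB : Finset.Icc 1 (M-1) ⊆ Finset.Icc 1 (N-1) :=
    Finset.Icc_subset_Icc_right (by omega)
  have hB : (∑ n ∈ Finset.Icc 1 (N-1),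
      (aForm φ lam (pval q c1 (n+1) (tt n) - pval q c1 n (tt n)) (pval q d1 (n+1) (tt n))
        + ⟪pval q c2 (n+1) (tt n) - pval q c2 n (tt n), pval q d2 (n+1) (tt n)⟫))
      = ∑ n ∈ Finset.Icc 1 (M-1),
          ((nodeSq q e μ l c1 c2 (n+1) (tt n) - nodeSq q e μ l c1 c2 n (tt n)) / 2
            + jumpSq q e μ l c1 c2 n (tt n) / 2) := by
    have hvanB : ∀ n ∈ Finset.Icc 1 (N-1), n ∉ Finset.Icc 1 (M-1) →
        (aForm φ lam (pval q c1 (n+1) (tt n) - pval q c1 n (tt n)) (pval q d1 (n+1) (tt n))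
          + ⟪pval q c2 (n+1) (tt n) - pval q c2 n (tt n), pval q d2 (n+1) (tt n)⟫) = 0 := by
      intro n hnN hnM
      have hMn : M < n + 1 := by
        simp only [Finset.mem_Icc] at hnN hnM
        omega
      rw [hpvd10 (n+1) _ hMn, hpvd20 (n+1) _ hMn, aForm_zero_right, inner_zero_right]
      ring
    rw [← Finset.sum_subset hsubB hvanB]
    refine Finset.sum_congr rfl fun n hn => ?_
    have hnM : n + 1 ≤ M := by
      have := (Finset.mem_Icc.1 hn)
      omega
    have hu1S : (pval q c1 (n+1) (tt n) - pval q c1 n (tt n)) ∈ S :=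
      sub_mem (hpvS c1 hc1S _ _) (hpvS c1 hc1S _ _)
    rw [hpvd1 (n+1) _ hnM, hpvd2 (n+1) _ hnM, haF _ (hS1 _ hu1S) _, hinner_wsum]
    have e1 : ∀ i : Fin m, aForm φ lam (pval q c1 (n+1) (tt n) - pval q c1 n (tt n)) (e i)
        = μ i * (coefP q e c1 i (n+1) (tt n) - coefP q e c1 i n (tt n)) := fun i => by
      rw [haSe _ hu1S i, inner_sub_left, hpvc, hpvc]
    have e2 : ∀ i : Fin m, ⟪pval q c2 (n+1) (tt n) - pval q c2 n (tt n), e i⟫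
        = coefP q e c2 i (n+1) (tt n) - coefP q e c2 i n (tt n) := fun i => by
      rw [inner_sub_left, hpvc, hpvc]
    simp only [e1, e2]
    unfold nodeSq jumpSq
    rw [← Finset.sum_sub_distrib, Finset.sum_div, Finset.sum_div, ← Finset.sum_add_distrib,
      ← Finset.sum_add_distrib]
    refine Finset.sum_congr rfl fun i _ => ?_
    rw [← hmulpow i]
    ring
  -- Group C : initial terms
  have hC1 : aForm φ lam (pval q c1 1 (tt 0)) (pval q d1 1 (tt 0))
      = ∑ i, μ i ^ (l+1) * coefP q e c1 i 1 (tt 0) ^ 2 := by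
    rw [hpvd1 1 _ hM1, haF _ (hS1 _ (hpvS c1 hc1S 1 (tt 0))) _]
    refine Finset.sum_congr rfl fun i _ => ?_
    rw [haSe _ (hpvS c1 hc1S 1 (tt 0)) i, hpvc, ← hmulpow i]
    ring
  have hC2 : ⟪pval q c2 1 (tt 0), pval q d2 1 (tt 0)⟫
      = ∑ i, μ i ^ l * coefP q e c2 i 1 (tt 0) ^ 2 := by
    rw [hpvd2 1 _ hM1, hinner_wsum]
    refine Finset.sum_congr rfl fun i _ => ?_
    rw [hpvc]
    ring
  -- the right-hand side
  have hR : (∑ n ∈ Finset.Icc 1 N, ∫ s in tt (n-1)..tt n,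
      (aForm φ lam (f1 s) (pval q d1 n s) + ⟪f2 s, pval q d2 n s⟫))
      = ∑ n ∈ Finset.Icc 1 M, ∫ s in tt (n-1)..tt n,
          Gfun q e μ l (fun t => Rh (f1 t)) (fun t => Ph (f2 t)) c1 c2 n s := by
    have hvanR : ∀ n ∈ Finset.Icc 1 N, n ∉ Finset.Icc 1 M →
        (∫ s in tt (n-1)..tt n,
          (aForm φ lam (f1 s) (pval q d1 n s) + ⟪f2 s, pval q d2 n s⟫)) = 0 := by
      intro n hnN hnM
      have hMn : M < n := by
        simp only [Finset.mem_Icc] at hnN hnM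
        omega
      have hz : ∀ s : ℝ, (aForm φ lam (f1 s) (pval q d1 n s) + ⟪f2 s, pval q d2 n s⟫) = 0 := by
        intro s
        rw [hpvd10 n s hMn, hpvd20 n s hMn, aForm_zero_right, inner_zero_right]
        ring
      rw [intervalIntegral.integral_congr (g := fun _ => (0:ℝ)) (fun s _ => hz s)]
      simp
    rw [← Finset.sum_subset hsubA hvanR]
    refine Finset.sum_congr rfl fun n hn => ?_
    have hnM : n ≤ M := (Finset.mem_Icc.1 hn).2
    refine intervalIntegral.integral_congr fun s _ => ?_
    rw [hpvd1 n s hnM, hpvd2 n s hnM, haF (f1 s) (hf1H s), hinner_wsum]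
    simp only [hf1e, hf2e]
    rw [← Finset.sum_add_distrib]
    unfold Gfun
    refine Finset.sum_congr rfl fun i _ => ?_
    show μ i ^ l * coefP q e c1 i n s * (μ i * ⟪Rh (f1 s), e i⟫)
        + μ i ^ l * coefP q e c2 i n s * ⟪Ph (f2 s), e i⟫
      = μ i ^ (l+1) * (⟪Rh (f1 s), e i⟫ * coefP q e c1 i n s)
        + μ i ^ l * (⟪Ph (f2 s), e i⟫ * coefP q e c2 i n s)
    rw [← hmulpow i]
    ring
  -- assemble
  rw [hA, hB, hC1, hC2, hR] at heqd
  have htel : (∑ n ∈ Finset.Icc 1 M,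
        (nodeSq q e μ l c1 c2 n (tt n) - nodeSq q e μ l c1 c2 n (tt (n-1))))
      + ∑ n ∈ Finset.Icc 1 (M-1),
        (nodeSq q e μ l c1 c2 (n+1) (tt n) - nodeSq q e μ l c1 c2 n (tt n))
      = nodeSq q e μ l c1 c2 M (tt M) - nodeSq q e μ l c1 c2 1 (tt 0) :=
    telescope_sum (fun n => nodeSq q e μ l c1 c2 n (tt n))
      (fun n => nodeSq q e μ l c1 c2 n (tt (n-1))) M hM1
  have hsplitA : ∑ n ∈ Finset.Icc 1 M,
      ((nodeSq q e μ l c1 c2 n (tt n) - nodeSq q e μ l c1 c2 n (tt (n-1))) / 2)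
      = (∑ n ∈ Finset.Icc 1 M,
          (nodeSq q e μ l c1 c2 n (tt n) - nodeSq q e μ l c1 c2 n (tt (n-1)))) / 2 :=
    (Finset.sum_div _ _ _).symm
  have hsplitB : ∑ n ∈ Finset.Icc 1 (M-1),
      ((nodeSq q e μ l c1 c2 (n+1) (tt n) - nodeSq q e μ l c1 c2 n (tt n)) / 2
        + jumpSq q e μ l c1 c2 n (tt n) / 2)
      = (∑ n ∈ Finset.Icc 1 (M-1),
          (nodeSq q e μ l c1 c2 (n+1) (tt n) - nodeSq q e μ l c1 c2 n (tt n))) / 2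
        + (∑ n ∈ Finset.Icc 1 (M-1), jumpSq q e μ l c1 c2 n (tt n)) / 2 := by
    rw [Finset.sum_add_distrib, Finset.sum_div, Finset.sum_div]
  have hC12 : (∑ i, μ i ^ (l+1) * coefP q e c1 i 1 (tt 0) ^ 2)
      + (∑ i, μ i ^ l * coefP q e c2 i 1 (tt 0) ^ 2) = nodeSq q e μ l c1 c2 1 (tt 0) := by
    unfold nodeSq
    rw [← Finset.sum_add_distrib]
  rw [hsplitB] at heqd
  -- hsplitA: the sum in heqd after hA is exactly sum of halves
  rw [hsplitA] at heqd
  linarith [heqd, htel, hC12]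
end KeyIdentity
lemma mesh_cover (tt : ℕ → ℝ) : ∀ K, 1 ≤ K → (∀ n, n < K → tt n < tt (n+1)) →
    ∀ t : ℝ, tt 0 < t → t ≤ tt K →
    ∃ n, 1 ≤ n ∧ n ≤ K ∧ tt (n-1) < t ∧ t ≤ tt n := by
  intro K hK
  induction K, hK using Nat.le_induction with
  | base =>
    intro _ t h0 h1
    exact ⟨1, le_refl _, le_refl _, by simpa using h0, h1⟩
  | succ K hK ih =>
    intro hm t h0 h1
    by_cases ht : t ≤ tt K
    · obtain ⟨n, hn1, hnK, ha, hb⟩ := ih (fun n hn => hm n (by omega)) t h0 ht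
      exact ⟨n, hn1, by omega, ha, hb⟩
    · push_neg at ht
      exact ⟨K+1, by omega, le_refl _, by simpa using ht, h1⟩

lemma mesh_mono (tt : ℕ → ℝ) (N : ℕ) (hm : ∀ n, n < N → tt n < tt (n+1)) :
    ∀ a b : ℕ, a ≤ b → b ≤ N → tt a ≤ tt b := by
  intro a b hab
  induction b, hab using Nat.le_induction with
  | base => intro _; exact le_refl _
  | succ b hb ih =>
    intro hbN
    exact (ih (by omega)).trans (le_of_lt (hm b (by omega)))
/-- **Uniform-in-time stability of the full discretization dG(q)–cG(r), q ∈ {0,1},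
with vanishing initial data.**
`sup_{(0,T)} ‖U₁‖_{h,l+1} + sup_{(0,T)} ‖U₂‖_{h,l}
  ≤ C ∫₀ᵀ (‖R_h f₁‖_{h,l+1} + ‖P_h f₂‖_{h,l})`. -/
theorem dGcG_uniform_stability
    {H : Type*} [NormedAddCommGroup H] [InnerProductSpace ℝ H] [CompleteSpace H]
    (φ : ℕ → H) (lam : ℕ → ℝ)
    (hφ : Orthonormal ℝ φ)
    (hφtotal : (Submodule.span ℝ (Set.range φ)).topologicalClosure = ⊤)
    (hlam_pos : ∀ k, 0 < lam k) (hlam_mono : Monotone lam)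
    (hlam_top : Filter.Tendsto lam Filter.atTop Filter.atTop)
    (q : ℕ) (hq : q = 0 ∨ q = 1) (l : ℝ) :
    ∃ C : ℝ, 0 < C ∧
      ∀ (T : ℝ), 0 < T → ∀ (N : ℕ), 1 ≤ N →
      ∀ tt : ℕ → ℝ, tt 0 = 0 → tt N = T → (∀ n < N, tt n < tt (n + 1)) →
      -- the finite element space S_h ⊂ V together with an orthonormal
      -- eigenbasis (e,μ) of A_h on S_h, and the projections R_h, P_h
      ∀ S : Submodule ℝ H, FiniteDimensional ℝ S → (∀ v ∈ S, MemHs φ lam 1 v) →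
      ∀ (m : ℕ) (e : Fin m → H) (μ : Fin m → ℝ),
      Orthonormal ℝ e → (∀ i, e i ∈ S) →
      (∀ v ∈ S, v = ∑ i, ⟪v, e i⟫ • e i) →
      (∀ i, 0 < μ i) →
      (∀ i, ∀ w ∈ S, aForm φ lam (e i) w = μ i * ⟪e i, w⟫) →
      ∀ Rh Ph : H → H,
      (∀ v, Rh v ∈ S) →
      (∀ v, MemHs φ lam 1 v → ∀ χ ∈ S, aForm φ lam (Rh v - v) χ = 0) →
      (∀ v, Ph v ∈ S) →
      (∀ v, ∀ χ ∈ S, ⟪Ph v - v, χ⟫ = 0) →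
      -- the data
      ∀ f1 f2 : ℝ → H,
      AEStronglyMeasurable f1 volume → AEStronglyMeasurable f2 volume →
      (∀ t, MemHs φ lam 1 (f1 t)) →
      IntervalIntegrable (fun t => hsNorm φ lam 1 (f1 t)) volume 0 T →
      IntervalIntegrable f2 volume 0 T →
      -- U = (U₁,U₂) ∈ 𝒱_{h,q}
      ∀ c1 c2 : ℕ → ℕ → H,
      (∀ n j, c1 n j ∈ S) → (∀ n j, c2 n j ∈ S) →
      -- the generalized discrete problem with u_{h,0} = 0 and v_{h,0} = 0
      (∀ d1 d2 : ℕ → ℕ → H, (∀ n j, d1 n j ∈ S) → (∀ n j, d2 n j ∈ S) →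
        Bform φ lam tt N q c1 c2 d1 d2 =
          ∑ n ∈ Finset.Icc 1 N, ∫ s in tt (n-1)..tt n,
            (aForm φ lam (f1 s) (pval q d1 n s) + ⟪f2 s, pval q d2 n s⟫)) →
      -- U₁, U₂ as functions of time (left-continuous piecewise polynomials)
      ∀ U1f U2f : ℝ → H,
      (∀ n ∈ Finset.Icc 1 N, ∀ t ∈ Set.Ioc (tt (n-1)) (tt n), U1f t = pval q c1 n t) →
      (∀ n ∈ Finset.Icc 1 N, ∀ t ∈ Set.Ioc (tt (n-1)) (tt n), U2f t = pval q c2 n t) →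
      (BddAbove ((fun t => hNormh e μ (l+1) (U1f t)) '' Set.Ioo 0 T) ∧
       BddAbove ((fun t => hNormh e μ l (U2f t)) '' Set.Ioo 0 T) ∧
       supIoo (fun t => hNormh e μ (l+1) (U1f t)) 0 T
          + supIoo (fun t => hNormh e μ l (U2f t)) 0 T
        ≤ C * ∫ t in (0:ℝ)..T,
            (hNormh e μ (l+1) (Rh (f1 t)) + hNormh e μ l (Ph (f2 t)))) := by

  classical
  refine ⟨32, by norm_num, ?_⟩
  intro T hT N hN tt htt0 httN httmono S _hSfd hS1 m e μ he heS hspan hμ heig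
    Rh Ph hRhS hRitz hPhS hPh f1 f2 hf1m hf2m hf1H hf1int hf2int c1 c2 hc1S hc2S heq
    U1f U2f hU1 hU2
  -- basic positivity/order facts
  have hlam : ∀ k, 0 ≤ lam k := fun k => (hlam_pos k).le
  have h0T : (0:ℝ) ≤ T := hT.le
  have hmono : ∀ a b : ℕ, a ≤ b → b ≤ N → tt a ≤ tt b := mesh_mono tt N httmono
  have httnn : ∀ n, n ≤ N → 0 ≤ tt n := by
    intro n hn
    have := hmono 0 n (Nat.zero_le n) hn
    rwa [htt0] at this
  have httleT : ∀ n, n ≤ N → tt n ≤ T := by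
    intro n hn
    have := hmono n N hn (le_refl N)
    rwa [httN] at this
  have hablt : ∀ n, 1 ≤ n → n ≤ N → tt (n-1) < tt n := by
    intro n h1 h2
    have := httmono (n-1) (by omega)
    have hn : n - 1 + 1 = n := by omega
    rwa [hn] at this
  have heH : ∀ i, MemHs φ lam 1 (e i) := fun i => hS1 _ (heS i)
  have hmulpow : ∀ i, μ i * μ i ^ l = μ i ^ (l+1) := by
    intro i
    rw [Real.rpow_add (hμ i), Real.rpow_one]
    ring
  have hrpownn : ∀ (i : Fin m) (r : ℝ), 0 ≤ μ i ^ r := fun i r =>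
    (Real.rpow_pos_of_pos (hμ i) r).le
  have haSe : ∀ u ∈ S, ∀ i, aForm φ lam u (e i) = μ i * ⟪u, e i⟫ := by
    intro u hu i
    rw [aForm_symm', heig i u hu, real_inner_comm]
  have hf1e : ∀ s i, aForm φ lam (f1 s) (e i) = μ i * ⟪Rh (f1 s), e i⟫ := by
    intro s i
    have h0 := hRitz (f1 s) (hf1H s) (e i) (heS i)
    rw [aForm_sub_left φ lam hlam (hS1 _ (hRhS (f1 s))) (hf1H s) (heH i)] at h0
    have h1 : aForm φ lam (f1 s) (e i) = aForm φ lam (Rh (f1 s)) (e i) := by linarith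
    rw [h1, haSe _ (hRhS (f1 s)) i]
  have hf2e : ∀ s i, ⟪Ph (f2 s), e i⟫ = ⟪f2 s, e i⟫ := by
    intro s i
    have h0 := hPh (f2 s) (e i) (heS i)
    rw [inner_sub_left] at h0
    linarith
  have hpvc : ∀ (c : ℕ → ℕ → H) n s i, ⟪pval q c n s, e i⟫ = coefP q e c i n s := by
    intro c n s i
    unfold pval coefP sp
    rw [sum_inner]
    exact Finset.sum_congr rfl fun j _ => by rw [real_inner_smul_left]
  -- value of the norms on each subinterval
  have hval1 : ∀ n, 1 ≤ n → n ≤ N → ∀ t ∈ Set.Ioc (tt (n-1)) (tt n),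
      hNormh e μ (l+1) (U1f t)
        = Real.sqrt (∑ i, μ i ^ (l+1) * (coefP q e c1 i n t) ^ 2) := by
    intro n h1 h2 t ht
    unfold hNormh hNormSqh
    rw [hU1 n (Finset.mem_Icc.2 ⟨h1, h2⟩) t ht]
    congr 1
    exact Finset.sum_congr rfl fun i _ => by rw [hpvc]
  have hval2 : ∀ n, 1 ≤ n → n ≤ N → ∀ t ∈ Set.Ioc (tt (n-1)) (tt n),
      hNormh e μ l (U2f t)
        = Real.sqrt (∑ i, μ i ^ l * (coefP q e c2 i n t) ^ 2) := by
    intro n h1 h2 t ht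
    unfold hNormh hNormSqh
    rw [hU2 n (Finset.mem_Icc.2 ⟨h1, h2⟩) t ht]
    congr 1
    exact Finset.sum_congr rfl fun i _ => by rw [hpvc]
  -- covering of (0,T)
  have hcov : ∀ t ∈ Set.Ioo (0:ℝ) T, ∃ n, 1 ≤ n ∧ n ≤ N ∧ t ∈ Set.Ioc (tt (n-1)) (tt n) := by
    intro t ht
    obtain ⟨n, h1, h2, h3, h4⟩ := mesh_cover tt N hN httmono t (by rw [htt0]; exact ht.1)
      (by rw [httN]; exact ht.2.le)
    exact ⟨n, h1, h2, h3, h4⟩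
  have hIooT : ∀ n, 1 ≤ n → n ≤ N → Set.Ioo (tt (n-1)) (tt n) ⊆ Set.Ioo (0:ℝ) T := by
    intro n h1 h2 s hs
    constructor
    · exact lt_of_le_of_lt (httnn (n-1) (by omega)) hs.1
    · exact lt_of_lt_of_le hs.2 (httleT n h2)
  -- boundedness of the sups
  have hub : ∀ (cc : ℕ → ℕ → H) (α : ℝ) (Uf : ℝ → H),
      (∀ n ∈ Finset.Icc 1 N, ∀ t ∈ Set.Ioc (tt (n-1)) (tt n), Uf t = pval q cc n t) →
      ∀ t ∈ Set.Ioo (0:ℝ) T, hNormh e μ α (Uf t) ≤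
        ∑ n ∈ Finset.Icc 1 N, ∑ i, Real.sqrt (μ i ^ α) *
          (∑ j ∈ Finset.range (q+1), (max 1 T)^j * |⟪cc n j, e i⟫|) := by
    intro cc α Uf hUf t ht
    obtain ⟨n, h1, h2, htIoc⟩ := hcov t ht
    unfold hNormh hNormSqh
    rw [hUf n (Finset.mem_Icc.2 ⟨h1, h2⟩) t htIoc]
    have ht0 : 0 ≤ t := ht.1.le
    have htmax : t ≤ max 1 T := le_trans ht.2.le (le_max_right 1 T)
    calc Real.sqrt (∑ i, μ i ^ α * ⟪pval q cc n t, e i⟫ ^ 2)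
        = Real.sqrt (∑ i, (Real.sqrt (μ i ^ α) * coefP q e cc i n t) ^ 2) := by
          congr 1
          refine Finset.sum_congr rfl fun i _ => ?_
          rw [hpvc, mul_pow, Real.sq_sqrt (hrpownn i α)]
      _ ≤ ∑ i, |Real.sqrt (μ i ^ α) * coefP q e cc i n t| := sqrt_sum_sq_le' _ _
      _ = ∑ i, Real.sqrt (μ i ^ α) * |coefP q e cc i n t| := by
          refine Finset.sum_congr rfl fun i _ => ?_
          rw [abs_mul, abs_of_nonneg (Real.sqrt_nonneg _)]
      _ ≤ ∑ i, Real.sqrt (μ i ^ α) *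
            (∑ j ∈ Finset.range (q+1), (max 1 T)^j * |⟪cc n j, e i⟫|) := by
          refine Finset.sum_le_sum fun i _ => ?_
          refine mul_le_mul_of_nonneg_left ?_ (Real.sqrt_nonneg _)
          unfold coefP sp
          calc |∑ j ∈ Finset.range (q+1), t ^ j * ⟪cc n j, e i⟫|
              ≤ ∑ j ∈ Finset.range (q+1), |t ^ j * ⟪cc n j, e i⟫| :=
                Finset.abs_sum_le_sum_abs _ _
            _ ≤ ∑ j ∈ Finset.range (q+1), (max 1 T)^j * |⟪cc n j, e i⟫| := by
                refine Finset.sum_le_sum fun j _ => ?_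
                rw [abs_mul, abs_of_nonneg (pow_nonneg ht0 j)]
                exact mul_le_mul_of_nonneg_right (pow_le_pow_left₀ ht0 htmax j) (abs_nonneg _)
      _ ≤ ∑ n' ∈ Finset.Icc 1 N, ∑ i, Real.sqrt (μ i ^ α) *
            (∑ j ∈ Finset.range (q+1), (max 1 T)^j * |⟪cc n' j, e i⟫|) := by
          refine Finset.single_le_sum (f := fun n' => ∑ i, Real.sqrt (μ i ^ α) *
            (∑ j ∈ Finset.range (q+1), (max 1 T)^j * |⟪cc n' j, e i⟫|)) ?_
            (Finset.mem_Icc.2 ⟨h1, h2⟩)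
          intro k _
          refine Finset.sum_nonneg fun i _ => mul_nonneg (Real.sqrt_nonneg _)
            (Finset.sum_nonneg fun j _ => mul_nonneg (pow_nonneg ?_ j) (abs_nonneg _))
          exact le_trans zero_le_one (le_max_left 1 T)
  have hbdd1 : BddAbove ((fun t => hNormh e μ (l+1) (U1f t)) '' Set.Ioo 0 T) :=
    ⟨∑ n ∈ Finset.Icc 1 N, ∑ i, Real.sqrt (μ i ^ (l+1)) *
        (∑ j ∈ Finset.range (q+1), (max 1 T)^j * |⟪c1 n j, e i⟫|), by
      rintro _ ⟨t, ht, rfl⟩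
      exact hub c1 (l+1) U1f hU1 t ht⟩
  have hbdd2 : BddAbove ((fun t => hNormh e μ l (U2f t)) '' Set.Ioo 0 T) :=
    ⟨∑ n ∈ Finset.Icc 1 N, ∑ i, Real.sqrt (μ i ^ l) *
        (∑ j ∈ Finset.range (q+1), (max 1 T)^j * |⟪c2 n j, e i⟫|), by
      rintro _ ⟨t, ht, rfl⟩
      exact hub c2 l U2f hU2 t ht⟩
  refine ⟨hbdd1, hbdd2, ?_⟩
  -- sups and their elementary properties
  have hTmem : T/2 ∈ Set.Ioo (0:ℝ) T := ⟨by linarith, by linarith⟩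
  have hSS1ub : ∀ t ∈ Set.Ioo (0:ℝ) T,
      hNormh e μ (l+1) (U1f t) ≤ supIoo (fun t => hNormh e μ (l+1) (U1f t)) 0 T :=
    fun t ht => le_csSup hbdd1 ⟨t, ht, rfl⟩
  have hSS2ub : ∀ t ∈ Set.Ioo (0:ℝ) T,
      hNormh e μ l (U2f t) ≤ supIoo (fun t => hNormh e μ l (U2f t)) 0 T :=
    fun t ht => le_csSup hbdd2 ⟨t, ht, rfl⟩
  have hSS1nn : 0 ≤ supIoo (fun t => hNormh e μ (l+1) (U1f t)) 0 T :=
    le_trans (Real.sqrt_nonneg _ : (0:ℝ) ≤ hNormh e μ (l+1) (U1f (T/2))) (hSS1ub (T/2) hTmem)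
  have hSS2nn : 0 ≤ supIoo (fun t => hNormh e μ l (U2f t)) 0 T :=
    le_trans (Real.sqrt_nonneg _ : (0:ℝ) ≤ hNormh e μ l (U2f (T/2))) (hSS2ub (T/2) hTmem)
  set SS1 := supIoo (fun t => hNormh e μ (l+1) (U1f t)) 0 T with hSS1def
  set SS2 := supIoo (fun t => hNormh e μ l (U2f t)) 0 T with hSS2def
  -- measurability and integrability of the data coefficients
  have hg1m : ∀ i : Fin m, AEStronglyMeasurable (fun t => ⟪Rh (f1 t), e i⟫) volume := by
    intro i
    have hpart : ∀ K : ℕ, AEStronglyMeasurable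
        (fun t => ∑ k ∈ Finset.range K, lam k ^ (1:ℝ) * ⟪f1 t, φ k⟫ * ⟪e i, φ k⟫) volume := by
      intro K
      refine Finset.aestronglyMeasurable_fun_sum _ fun k _ => ?_
      exact ((hf1m.inner aestronglyMeasurable_const).const_mul _).mul_const _
    have haesm : AEStronglyMeasurable (fun t => aForm φ lam (f1 t) (e i)) volume := by
      refine aestronglyMeasurable_of_tendsto_ae Filter.atTop hpart
        (Filter.Eventually.of_forall fun t => ?_)
      exact (summable_aterm φ lam hlam (hf1H t) (heH i)).hasSum.tendsto_sum_nat
    have hrw : (fun t => ⟪Rh (f1 t), e i⟫) = fun t => (μ i)⁻¹ * aForm φ lam (f1 t) (e i) := by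
      funext t
      rw [hf1e t i, inv_mul_cancel_left₀ (hμ i).ne']
    rw [hrw]
    exact haesm.const_mul _
  have hg1int : ∀ i : Fin m, IntervalIntegrable (fun t => ⟪Rh (f1 t), e i⟫) volume 0 T := by
    intro i
    refine IntervalIntegrable.mono_fun
      (hf1int.const_mul ((μ i)⁻¹ * hsNorm φ lam 1 (e i))) ((hg1m i).restrict)
      (Filter.Eventually.of_forall fun t => ?_)
    have h1 : |⟪Rh (f1 t), e i⟫| ≤ (μ i)⁻¹ * (hsNorm φ lam 1 (f1 t) * hsNorm φ lam 1 (e i)) := by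
      have h2 := aForm_abs_le φ lam hlam (hf1H t) (heH i)
      have h3 : ⟪Rh (f1 t), e i⟫ = (μ i)⁻¹ * aForm φ lam (f1 t) (e i) := by
        rw [hf1e t i, inv_mul_cancel_left₀ (hμ i).ne']
      rw [h3, abs_mul, abs_of_nonneg (inv_nonneg.2 (hμ i).le)]
      exact mul_le_mul_of_nonneg_left h2 (inv_nonneg.2 (hμ i).le)
    calc ‖⟪Rh (f1 t), e i⟫‖ = |⟪Rh (f1 t), e i⟫| := Real.norm_eq_abs _
    _ ≤ (μ i)⁻¹ * (hsNorm φ lam 1 (f1 t) * hsNorm φ lam 1 (e i)) := h1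
    _ = (μ i)⁻¹ * hsNorm φ lam 1 (e i) * hsNorm φ lam 1 (f1 t) := by ring
    _ ≤ ‖(μ i)⁻¹ * hsNorm φ lam 1 (e i) * hsNorm φ lam 1 (f1 t)‖ := le_abs_self _
  have hg2m : ∀ i : Fin m, AEStronglyMeasurable (fun t => ⟪f2 t, e i⟫) volume :=
    fun i => hf2m.inner aestronglyMeasurable_const
  have hg2int : ∀ i : Fin m, IntervalIntegrable (fun t => ⟪f2 t, e i⟫) volume 0 T := by
    intro i
    refine IntervalIntegrable.mono_fun hf2int.norm ((hg2m i).restrict)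
      (Filter.Eventually.of_forall fun t => ?_)
    calc ‖⟪f2 t, e i⟫‖ = |⟪f2 t, e i⟫| := Real.norm_eq_abs _
    _ ≤ ‖f2 t‖ * ‖e i‖ := abs_real_inner_le_norm _ _
    _ = ‖f2 t‖ := by rw [he.1 i, mul_one]
    _ ≤ ‖‖f2 t‖‖ := le_abs_self _
  have hg2m' : ∀ i : Fin m, AEStronglyMeasurable (fun t => ⟪Ph (f2 t), e i⟫) volume := by
    intro i
    have : (fun t => ⟪Ph (f2 t), e i⟫) = fun t => ⟪f2 t, e i⟫ := funext fun t => hf2e t i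
    rw [this]; exact hg2m i
  have hg2int' : ∀ i : Fin m, IntervalIntegrable (fun t => ⟪Ph (f2 t), e i⟫) volume 0 T := by
    intro i
    have : (fun t => ⟪Ph (f2 t), e i⟫) = fun t => ⟪f2 t, e i⟫ := funext fun t => hf2e t i
    rw [this]; exact hg2int i
  -- integrability of the discrete norms of the data
  have hnorm_int : ∀ (g : ℝ → H) (α : ℝ),
      (∀ i : Fin m, AEStronglyMeasurable (fun t => ⟪g t, e i⟫) volume) →
      (∀ i : Fin m, IntervalIntegrable (fun t => ⟪g t, e i⟫) volume 0 T) →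
      IntervalIntegrable (fun t => hNormh e μ α (g t)) volume 0 T := by
    intro g α hgm hgint
    have hm : AEStronglyMeasurable (fun t => hNormh e μ α (g t)) volume := by
      have hsum : AEStronglyMeasurable (fun t => ∑ i, μ i ^ α * ⟪g t, e i⟫ ^ 2) volume := by
        refine Finset.aestronglyMeasurable_fun_sum _ fun i _ => ?_
        have : (fun t => μ i ^ α * ⟪g t, e i⟫ ^ 2)
            = fun t => μ i ^ α * (⟪g t, e i⟫ * ⟪g t, e i⟫) := by
          funext t; ring
        rw [this]
        exact ((hgm i).mul (hgm i)).const_mul _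
      exact Real.continuous_sqrt.comp_aestronglyMeasurable hsum
    have hbint : IntervalIntegrable
        (fun t => ∑ i, Real.sqrt (μ i ^ α) * |⟪g t, e i⟫|) volume 0 T := by
      have hsum := IntervalIntegrable.sum Finset.univ
        (f := fun (i : Fin m) => fun t => Real.sqrt (μ i ^ α) * |⟪g t, e i⟫|)
        (fun i _ => ((hgint i).abs).const_mul _)
      have h2 : (∑ i : Fin m, fun t => Real.sqrt (μ i ^ α) * |⟪g t, e i⟫|)
          = fun t => ∑ i, Real.sqrt (μ i ^ α) * |⟪g t, e i⟫| := by
        funext t; simp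
      rwa [h2] at hsum
    refine IntervalIntegrable.mono_fun hbint hm.restrict
      (Filter.Eventually.of_forall fun t => ?_)
    have hle : hNormh e μ α (g t) ≤ ∑ i, Real.sqrt (μ i ^ α) * |⟪g t, e i⟫| := by
      unfold hNormh hNormSqh
      calc Real.sqrt (∑ i, μ i ^ α * ⟪g t, e i⟫ ^ 2)
          = Real.sqrt (∑ i, (Real.sqrt (μ i ^ α) * ⟪g t, e i⟫) ^ 2) := by
            congr 1
            exact Finset.sum_congr rfl fun i _ => by
              rw [mul_pow, Real.sq_sqrt (hrpownn i α)]
        _ ≤ ∑ i, |Real.sqrt (μ i ^ α) * ⟪g t, e i⟫| := sqrt_sum_sq_le' _ _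
        _ = ∑ i, Real.sqrt (μ i ^ α) * |⟪g t, e i⟫| := Finset.sum_congr rfl fun i _ => by
            rw [abs_mul, abs_of_nonneg (Real.sqrt_nonneg _)]
    calc ‖hNormh e μ α (g t)‖ = hNormh e μ α (g t) := by
          unfold hNormh
          rw [Real.norm_eq_abs, abs_of_nonneg (Real.sqrt_nonneg _)]
    _ ≤ ∑ i, Real.sqrt (μ i ^ α) * |⟪g t, e i⟫| := hle
    _ ≤ ‖∑ i, Real.sqrt (μ i ^ α) * |⟪g t, e i⟫|‖ := le_abs_self _
  have hF1int : IntervalIntegrable (fun t => hNormh e μ (l+1) (Rh (f1 t))) volume 0 T :=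
    hnorm_int (fun t => Rh (f1 t)) (l+1) hg1m hg1int
  have hF2int : IntervalIntegrable (fun t => hNormh e μ l (Ph (f2 t))) volume 0 T :=
    hnorm_int (fun t => Ph (f2 t)) l hg2m' hg2int'
  set FF : ℝ → ℝ := fun t => hNormh e μ (l+1) (Rh (f1 t)) + hNormh e μ l (Ph (f2 t)) with hFFdef
  have hFFint : IntervalIntegrable FF volume 0 T := hF1int.add hF2int
  have hFFnn : ∀ t, 0 ≤ FF t := fun t =>
    add_nonneg (Real.sqrt_nonneg _) (Real.sqrt_nonneg _)
  set Kint := ∫ t in (0:ℝ)..T, FF t with hKintdef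
  have hKintnn : 0 ≤ Kint :=
    intervalIntegral.integral_nonneg h0T fun u _ => hFFnn u
  -- subinterval inclusion
  have husub : ∀ n, 1 ≤ n → n ≤ N → Set.uIcc (tt (n-1)) (tt n) ⊆ Set.uIcc 0 T := by
    intro n h1 h2
    rw [Set.uIcc_of_le (hablt n h1 h2).le, Set.uIcc_of_le h0T]
    exact Set.Icc_subset_Icc (httnn (n-1) (by omega)) (httleT n h2)
  -- integrability of the right-hand side integrand
  have hGint : ∀ n, 1 ≤ n → n ≤ N → IntervalIntegrable
      (fun s => Gfun q e μ l (fun t => Rh (f1 t)) (fun t => Ph (f2 t)) c1 c2 n s)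
      volume (tt (n-1)) (tt n) := by
    intro n h1 h2
    have hterm : ∀ i : Fin m, IntervalIntegrable
        (fun s => μ i ^ (l+1) * (⟪Rh (f1 s), e i⟫ * coefP q e c1 i n s)
          + μ i ^ l * (⟪Ph (f2 s), e i⟫ * coefP q e c2 i n s)) volume (tt (n-1)) (tt n) := by
      intro i
      refine IntervalIntegrable.add ?_ ?_
      · exact (((hg1int i).mono_set (husub n h1 h2)).mul_continuousOn
          (coefP_continuous q e c1 i n).continuousOn).const_mul _
      · exact (((hg2int' i).mono_set (husub n h1 h2)).mul_continuousOn
          (coefP_continuous q e c2 i n).continuousOn).const_mul _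
    have hsum := IntervalIntegrable.sum Finset.univ
      (f := fun (i : Fin m) => fun s => μ i ^ (l+1) * (⟪Rh (f1 s), e i⟫ * coefP q e c1 i n s)
        + μ i ^ l * (⟪Ph (f2 s), e i⟫ * coefP q e c2 i n s)) (fun i _ => hterm i)
    have h2' : (∑ i : Fin m, fun s => μ i ^ (l+1) * (⟪Rh (f1 s), e i⟫ * coefP q e c1 i n s)
        + μ i ^ l * (⟪Ph (f2 s), e i⟫ * coefP q e c2 i n s))
        = fun s => Gfun q e μ l (fun t => Rh (f1 t)) (fun t => Ph (f2 t)) c1 c2 n s := by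
      funext s
      unfold Gfun
      simp
    rwa [h2'] at hsum
  -- pointwise bound of the right-hand side integrand
  have hGle : ∀ n, 1 ≤ n → n ≤ N → ∀ s ∈ Set.Ioo (tt (n-1)) (tt n),
      Gfun q e μ l (fun t => Rh (f1 t)) (fun t => Ph (f2 t)) c1 c2 n s
        ≤ FF s * (SS1 + SS2) := by
    intro n h1 h2 s hs
    have hsT : s ∈ Set.Ioo (0:ℝ) T := hIooT n h1 h2 hs
    have hsIoc : s ∈ Set.Ioc (tt (n-1)) (tt n) := ⟨hs.1, hs.2.le⟩
    have hcs1 : ∑ i, μ i ^ (l+1) * (⟪Rh (f1 s), e i⟫ * coefP q e c1 i n s)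
        ≤ hNormh e μ (l+1) (Rh (f1 s)) * hNormh e μ (l+1) (U1f s) := by
      have hw := weighted_cs Finset.univ (fun i => μ i ^ (l+1))
        (fun i => ⟪Rh (f1 s), e i⟫) (fun i => coefP q e c1 i n s) (fun i _ => hrpownn i _)
      calc ∑ i, μ i ^ (l+1) * (⟪Rh (f1 s), e i⟫ * coefP q e c1 i n s)
          = ∑ i, μ i ^ (l+1) * ⟪Rh (f1 s), e i⟫ * coefP q e c1 i n s :=
            Finset.sum_congr rfl fun i _ => by ring
        _ ≤ Real.sqrt (∑ i, μ i ^ (l+1) * ⟪Rh (f1 s), e i⟫ ^ 2)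
            * Real.sqrt (∑ i, μ i ^ (l+1) * coefP q e c1 i n s ^ 2) := hw
        _ = hNormh e μ (l+1) (Rh (f1 s)) * hNormh e μ (l+1) (U1f s) := by
            rw [hval1 n h1 h2 s hsIoc]
            rfl
    have hcs2 : ∑ i, μ i ^ l * (⟪Ph (f2 s), e i⟫ * coefP q e c2 i n s)
        ≤ hNormh e μ l (Ph (f2 s)) * hNormh e μ l (U2f s) := by
      have hw := weighted_cs Finset.univ (fun i => μ i ^ l)
        (fun i => ⟪Ph (f2 s), e i⟫) (fun i => coefP q e c2 i n s) (fun i _ => hrpownn i _)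
      calc ∑ i, μ i ^ l * (⟪Ph (f2 s), e i⟫ * coefP q e c2 i n s)
          = ∑ i, μ i ^ l * ⟪Ph (f2 s), e i⟫ * coefP q e c2 i n s :=
            Finset.sum_congr rfl fun i _ => by ring
        _ ≤ Real.sqrt (∑ i, μ i ^ l * ⟪Ph (f2 s), e i⟫ ^ 2)
            * Real.sqrt (∑ i, μ i ^ l * coefP q e c2 i n s ^ 2) := hw
        _ = hNormh e μ l (Ph (f2 s)) * hNormh e μ l (U2f s) := by
            rw [hval2 n h1 h2 s hsIoc]
            rfl
    have hN1le := hSS1ub s hsT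
    have hN2le := hSS2ub s hsT
    have hF1nn : (0:ℝ) ≤ hNormh e μ (l+1) (Rh (f1 s)) := Real.sqrt_nonneg _
    have hF2nn : (0:ℝ) ≤ hNormh e μ l (Ph (f2 s)) := Real.sqrt_nonneg _
    have hN1nn : (0:ℝ) ≤ hNormh e μ (l+1) (U1f s) := Real.sqrt_nonneg _
    have hN2nn : (0:ℝ) ≤ hNormh e μ l (U2f s) := Real.sqrt_nonneg _
    have hGsplit : Gfun q e μ l (fun t => Rh (f1 t)) (fun t => Ph (f2 t)) c1 c2 n s
        = (∑ i, μ i ^ (l+1) * (⟪Rh (f1 s), e i⟫ * coefP q e c1 i n s))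
          + ∑ i, μ i ^ l * (⟪Ph (f2 s), e i⟫ * coefP q e c2 i n s) := by
      unfold Gfun
      rw [Finset.sum_add_distrib]
    rw [hGsplit]
    simp only [hFFdef]
    have hmul1 : hNormh e μ (l+1) (Rh (f1 s)) * hNormh e μ (l+1) (U1f s)
        ≤ hNormh e μ (l+1) (Rh (f1 s)) * SS1 := mul_le_mul_of_nonneg_left hN1le hF1nn
    have hmul2 : hNormh e μ l (Ph (f2 s)) * hNormh e μ l (U2f s)
        ≤ hNormh e μ l (Ph (f2 s)) * SS2 := mul_le_mul_of_nonneg_left hN2le hF2nn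
    have hcross : 0 ≤ hNormh e μ (l+1) (Rh (f1 s)) * SS2 := mul_nonneg hF1nn hSS2nn
    have hcross2 : 0 ≤ hNormh e μ l (Ph (f2 s)) * SS1 := mul_nonneg hF2nn hSS1nn
    nlinarith [hcs1, hcs2, hmul1, hmul2, hcross, hcross2]
  -- integral bound on each subinterval
  have hIntle : ∀ n, 1 ≤ n → n ≤ N →
      (∫ s in tt (n-1)..tt n, Gfun q e μ l (fun t => Rh (f1 t)) (fun t => Ph (f2 t)) c1 c2 n s)
        ≤ ∫ s in tt (n-1)..tt n, FF s * (SS1 + SS2) := by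
    intro n h1 h2
    refine intervalIntegral.integral_mono_ae_restrict (hablt n h1 h2).le (hGint n h1 h2)
      ((hFFint.mono_set (husub n h1 h2)).mul_const _) ?_
    have hzero : (volume.restrict (Set.Icc (tt (n-1)) (tt n)))
        {s : ℝ | ¬ s ∈ Set.Ioo (tt (n-1)) (tt n)} = 0 := by
      rw [show {s : ℝ | ¬ s ∈ Set.Ioo (tt (n-1)) (tt n)}
          = (Set.Ioo (tt (n-1)) (tt n))ᶜ from rfl,
        MeasureTheory.Measure.restrict_apply measurableSet_Ioo.compl]
      refine MeasureTheory.measure_mono_null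
        (t := ({tt (n-1), tt n} : Set ℝ)) ?_ ?_
      · rintro x ⟨hx1, hx2⟩
        simp only [Set.mem_compl_iff, Set.mem_Ioo, not_and_or, not_lt] at hx1
        rcases hx1 with h | h
        · left; exact le_antisymm h hx2.1
        · right; exact le_antisymm hx2.2 h
      · exact ((Set.countable_singleton (tt n)).insert (tt (n-1))).measure_zero _
    have hae : ∀ᵐ s ∂(volume.restrict (Set.Icc (tt (n-1)) (tt n))),
        s ∈ Set.Ioo (tt (n-1)) (tt n) := by
      rw [MeasureTheory.ae_iff]
      exact hzero
    exact hae.mono fun s hs => hGle n h1 h2 s hs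
  -- the summed right-hand side bound
  have hsum_bound : ∀ M, 1 ≤ M → M ≤ N →
      (∑ n ∈ Finset.Icc 1 M, ∫ s in tt (n-1)..tt n,
        Gfun q e μ l (fun t => Rh (f1 t)) (fun t => Ph (f2 t)) c1 c2 n s)
        ≤ Kint * (SS1 + SS2) := by
    intro M hM1 hMN
    have hstep1 : (∑ n ∈ Finset.Icc 1 M, ∫ s in tt (n-1)..tt n,
        Gfun q e μ l (fun t => Rh (f1 t)) (fun t => Ph (f2 t)) c1 c2 n s)
        ≤ ∑ n ∈ Finset.Icc 1 M, ∫ s in tt (n-1)..tt n, FF s * (SS1 + SS2) := by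
      refine Finset.sum_le_sum fun n hn => ?_
      have hn' := Finset.mem_Icc.1 hn
      exact hIntle n hn'.1 (hn'.2.trans hMN)
    have hstep2 : (∑ n ∈ Finset.Icc 1 M, ∫ s in tt (n-1)..tt n, FF s * (SS1 + SS2))
        = ∫ s in (tt 0)..(tt M), FF s * (SS1 + SS2) := by
      rw [sum_Icc_one_eq_range (fun n => ∫ s in tt (n-1)..tt n, FF s * (SS1 + SS2)) M]
      refine intervalIntegral.sum_integral_adjacent_intervals
        (a := fun k => tt k) (n := M) ?_
      intro k hk
      exact (hFFint.mono_set (husub (k+1) (by omega) (by omega))).mul_const _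
    have hstep3 : (∫ s in (tt 0)..(tt M), FF s * (SS1 + SS2))
        = (∫ s in (tt 0)..(tt M), FF s) * (SS1 + SS2) :=
      intervalIntegral.integral_mul_const _ _
    have hsub1 : Set.uIcc 0 (tt M) ⊆ Set.uIcc 0 T := by
      rw [Set.uIcc_of_le (httnn M hMN), Set.uIcc_of_le h0T]
      exact Set.Icc_subset_Icc (le_refl 0) (httleT M hMN)
    have hsub2 : Set.uIcc (tt M) T ⊆ Set.uIcc 0 T := by
      rw [Set.uIcc_of_le (httleT M hMN), Set.uIcc_of_le h0T]
      exact Set.Icc_subset_Icc (httnn M hMN) (le_refl T)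
    have hstep4 : (∫ s in (tt 0)..(tt M), FF s) ≤ Kint := by
      rw [htt0]
      have hadd := intervalIntegral.integral_add_adjacent_intervals
        (a := (0:ℝ)) (b := tt M) (c := T) (μ := volume) (f := FF)
        (hFFint.mono_set hsub1)
        (hFFint.mono_set hsub2)
      have hnn2 : 0 ≤ ∫ s in tt M..T, FF s :=
        intervalIntegral.integral_nonneg (httleT M hMN) (fun u _ => hFFnn u)
      rw [hKintdef]
      linarith [hadd]
    calc (∑ n ∈ Finset.Icc 1 M, ∫ s in tt (n-1)..tt n,
        Gfun q e μ l (fun t => Rh (f1 t)) (fun t => Ph (f2 t)) c1 c2 n s)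
        ≤ ∑ n ∈ Finset.Icc 1 M, ∫ s in tt (n-1)..tt n, FF s * (SS1 + SS2) := hstep1
      _ = (∫ s in (tt 0)..(tt M), FF s) * (SS1 + SS2) := by rw [hstep2, hstep3]
      _ ≤ Kint * (SS1 + SS2) :=
          mul_le_mul_of_nonneg_right hstep4 (add_nonneg hSS1nn hSS2nn)
  -- nonnegativity of the quadratic quantities
  have hnodenn : ∀ k t', 0 ≤ nodeSq q e μ l c1 c2 k t' := fun k t' =>
    Finset.sum_nonneg fun i _ => add_nonneg (mul_nonneg (hrpownn i _) (sq_nonneg _))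
      (mul_nonneg (hrpownn i _) (sq_nonneg _))
  have hjumpnn : ∀ k t', 0 ≤ jumpSq q e μ l c1 c2 k t' := fun k t' =>
    Finset.sum_nonneg fun i _ => add_nonneg (mul_nonneg (hrpownn i _) (sq_nonneg _))
      (mul_nonneg (hrpownn i _) (sq_nonneg _))
  -- the three basic bounds from the energy identity
  have hkeyid := fun (M : ℕ) (hM1 : 1 ≤ M) (hMN : M ≤ N) =>
    key_identity φ lam hlam q l N tt S hS1 m e μ he heS hμ heig Rh Ph hRhS hRitz hPh
      f1 f2 hf1H c1 c2 hc1S hc2S heq M hM1 hMN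
  have hnode : ∀ M, 1 ≤ M → M ≤ N →
      nodeSq q e μ l c1 c2 M (tt M) ≤ 2 * (Kint * (SS1 + SS2)) := by
    intro M hM1 hMN
    have hid := hkeyid M hM1 hMN
    have hb := hsum_bound M hM1 hMN
    have hjs : 0 ≤ ∑ n ∈ Finset.Icc 1 (M-1), jumpSq q e μ l c1 c2 n (tt n) :=
      Finset.sum_nonneg fun n _ => hjumpnn n (tt n)
    have h1 := hnodenn 1 (tt 0)
    linarith [hid, hb, hjs, h1]
  have hstart1 : nodeSq q e μ l c1 c2 1 (tt 0) ≤ 2 * (Kint * (SS1 + SS2)) := by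
    have hid := hkeyid 1 (le_refl 1) hN
    have hb := hsum_bound 1 (le_refl 1) hN
    have hjs : 0 ≤ ∑ n ∈ Finset.Icc 1 (1-1), jumpSq q e μ l c1 c2 n (tt n) :=
      Finset.sum_nonneg fun n _ => hjumpnn n (tt n)
    have h1 := hnodenn 1 (tt 1)
    linarith [hid, hb, hjs, h1]
  have hjump : ∀ k, 1 ≤ k → k ≤ N - 1 →
      jumpSq q e μ l c1 c2 k (tt k) ≤ 2 * (Kint * (SS1 + SS2)) := by
    intro k h1 h2
    have hid := hkeyid N hN (le_refl N)
    have hb := hsum_bound N hN (le_refl N)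
    have hsingle : jumpSq q e μ l c1 c2 k (tt k)
        ≤ ∑ n ∈ Finset.Icc 1 (N-1), jumpSq q e μ l c1 c2 n (tt n) :=
      Finset.single_le_sum (fun n _ => hjumpnn n (tt n)) (Finset.mem_Icc.2 ⟨h1, h2⟩)
    have hn1 := hnodenn N (tt N)
    have hn2 := hnodenn 1 (tt 0)
    linarith [hid, hb, hsingle, hn1, hn2]
  -- interior bound by convexity
  have hKSnn : 0 ≤ Kint * (SS1 + SS2) := mul_nonneg hKintnn (add_nonneg hSS1nn hSS2nn)
  have hinterior : ∀ n, 1 ≤ n → n ≤ N → ∀ t ∈ Set.Ioc (tt (n-1)) (tt n),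
      nodeSq q e μ l c1 c2 n t ≤ 8 * (Kint * (SS1 + SS2)) := by
    intro n h1 h2 t ht
    have hmax : nodeSq q e μ l c1 c2 n t
        ≤ max (nodeSq q e μ l c1 c2 n (tt (n-1))) (nodeSq q e μ l c1 c2 n (tt n)) := by
      rcases hq with hq0 | hq1
      · subst hq0
        have hcst : ∀ s : ℝ, nodeSq 0 e μ l c1 c2 n s = nodeSq 0 e μ l c1 c2 n (tt n) := by
          intro s
          unfold nodeSq coefP sp
          simp
        exact le_max_of_le_right (le_of_eq (hcst t))
      · subst hq1
        have hcoef : ∀ (c : ℕ → ℕ → H) (i : Fin m) (s : ℝ),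
            coefP 1 e c i n s = ⟪c n 0, e i⟫ + s * ⟪c n 1, e i⟫ := by
          intro c i s
          unfold coefP sp
          simp [Finset.sum_range_succ]
        have hexp : ∀ s : ℝ, nodeSq 1 e μ l c1 c2 n s
            = (∑ i, (μ i ^ (l+1) * ⟪c1 n 0, e i⟫^2 + μ i ^ l * ⟪c2 n 0, e i⟫^2))
              + (∑ i, (μ i ^ (l+1) * (2*⟪c1 n 0, e i⟫*⟪c1 n 1, e i⟫)
                  + μ i ^ l * (2*⟪c2 n 0, e i⟫*⟪c2 n 1, e i⟫))) * s
              + (∑ i, (μ i ^ (l+1) * ⟪c1 n 1, e i⟫^2 + μ i ^ l * ⟪c2 n 1, e i⟫^2)) * s^2 := by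
          intro s
          unfold nodeSq
          rw [Finset.sum_mul, Finset.sum_mul, ← Finset.sum_add_distrib,
            ← Finset.sum_add_distrib]
          refine Finset.sum_congr rfl fun i _ => ?_
          rw [hcoef c1 i s, hcoef c2 i s]
          ring
        have hC : 0 ≤ ∑ i, (μ i ^ (l+1) * ⟪c1 n 1, e i⟫^2 + μ i ^ l * ⟪c2 n 1, e i⟫^2) :=
          Finset.sum_nonneg fun i _ => add_nonneg (mul_nonneg (hrpownn i _) (sq_nonneg _))
            (mul_nonneg (hrpownn i _) (sq_nonneg _))
        rw [hexp t, hexp (tt (n-1)), hexp (tt n)]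
        exact quad_le_max _ _ _ (tt (n-1)) (tt n) t hC ht.1.le ht.2
    have hright : nodeSq q e μ l c1 c2 n (tt n) ≤ 2 * (Kint * (SS1 + SS2)) := hnode n h1 h2
    have hleft : nodeSq q e μ l c1 c2 n (tt (n-1)) ≤ 8 * (Kint * (SS1 + SS2)) := by
      rcases eq_or_lt_of_le h1 with h1' | h1'
      · rw [← h1']
        have hgoal : nodeSq q e μ l c1 c2 1 (tt (1-1)) = nodeSq q e μ l c1 c2 1 (tt 0) := rfl
        rw [hgoal]
        linarith [hstart1, hKSnn]
      · have hn2 : 2 ≤ n := h1'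
        have hsucc : n - 1 + 1 = n := by omega
        have hmink := minkowski_two Finset.univ (fun i => μ i ^ (l+1)) (fun i => μ i ^ l)
          (fun i => coefP q e c1 i (n-1) (tt (n-1)))
          (fun i => coefP q e c1 i n (tt (n-1)) - coefP q e c1 i (n-1) (tt (n-1)))
          (fun i => coefP q e c2 i (n-1) (tt (n-1)))
          (fun i => coefP q e c2 i n (tt (n-1)) - coefP q e c2 i (n-1) (tt (n-1)))
          (fun i _ => hrpownn i _) (fun i _ => hrpownn i _)
        have hEq1 : (∑ i, ((fun i => μ i ^ (l+1)) i * ((fun i => coefP q e c1 i (n-1) (tt (n-1))) i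
              + (fun i => coefP q e c1 i n (tt (n-1)) - coefP q e c1 i (n-1) (tt (n-1))) i) ^ 2
            + (fun i => μ i ^ l) i * ((fun i => coefP q e c2 i (n-1) (tt (n-1))) i
              + (fun i => coefP q e c2 i n (tt (n-1)) - coefP q e c2 i (n-1) (tt (n-1))) i) ^ 2))
            = nodeSq q e μ l c1 c2 n (tt (n-1)) := by
          unfold nodeSq
          exact Finset.sum_congr rfl fun i _ => by ring
        have hEq2 : (∑ i, ((fun i => μ i ^ (l+1)) i * ((fun i => coefP q e c1 i (n-1) (tt (n-1))) i) ^ 2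
            + (fun i => μ i ^ l) i * ((fun i => coefP q e c2 i (n-1) (tt (n-1))) i) ^ 2))
            = nodeSq q e μ l c1 c2 (n-1) (tt (n-1)) := by
          unfold nodeSq
          exact Finset.sum_congr rfl fun i _ => by ring
        have hEq3 : (∑ i, ((fun i => μ i ^ (l+1)) i * ((fun i => coefP q e c1 i n (tt (n-1))
              - coefP q e c1 i (n-1) (tt (n-1))) i) ^ 2
            + (fun i => μ i ^ l) i * ((fun i => coefP q e c2 i n (tt (n-1))
              - coefP q e c2 i (n-1) (tt (n-1))) i) ^ 2))
            = jumpSq q e μ l c1 c2 (n-1) (tt (n-1)) := by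
          unfold jumpSq
          rw [hsucc]
          try exact Finset.sum_congr rfl fun i _ => by ring
        rw [hEq1, hEq2, hEq3] at hmink
        have hs1 : Real.sqrt (nodeSq q e μ l c1 c2 (n-1) (tt (n-1)))
            ≤ Real.sqrt (2 * (Kint * (SS1+SS2))) :=
          Real.sqrt_le_sqrt (hnode (n-1) (by omega) (by omega))
        have hs2 : Real.sqrt (jumpSq q e μ l c1 c2 (n-1) (tt (n-1)))
            ≤ Real.sqrt (2 * (Kint * (SS1+SS2))) :=
          Real.sqrt_le_sqrt (hjump (n-1) (by omega) (by omega))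
        have hfin : Real.sqrt (nodeSq q e μ l c1 c2 n (tt (n-1)))
            ≤ 2 * Real.sqrt (2 * (Kint * (SS1+SS2))) := by linarith
        have h0' : 0 ≤ nodeSq q e μ l c1 c2 n (tt (n-1)) := hnodenn n (tt (n-1))
        calc nodeSq q e μ l c1 c2 n (tt (n-1))
            = (Real.sqrt (nodeSq q e μ l c1 c2 n (tt (n-1)))) ^ 2 := (Real.sq_sqrt h0').symm
          _ ≤ (2 * Real.sqrt (2 * (Kint * (SS1+SS2)))) ^ 2 := by
              have := Real.sqrt_nonneg (nodeSq q e μ l c1 c2 n (tt (n-1)))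
              nlinarith [hfin, this, Real.sqrt_nonneg (2 * (Kint * (SS1+SS2)))]
          _ = 4 * (2 * (Kint * (SS1+SS2))) := by
              rw [mul_pow, Real.sq_sqrt (by linarith [hKSnn] : (0:ℝ) ≤ 2 * (Kint * (SS1+SS2)))]
              ring
          _ = 8 * (Kint * (SS1+SS2)) := by ring
    exact hmax.trans (max_le hleft (by linarith [hright, hKSnn]))
  -- pointwise bounds for the norms on (0,T)
  have hN1f : ∀ t ∈ Set.Ioo (0:ℝ) T,
      hNormh e μ (l+1) (U1f t) ≤ Real.sqrt (8 * (Kint * (SS1+SS2))) := by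
    intro t ht
    obtain ⟨n, h1, h2, htIoc⟩ := hcov t ht
    rw [hval1 n h1 h2 t htIoc]
    refine Real.sqrt_le_sqrt (le_trans ?_ (hinterior n h1 h2 t htIoc))
    unfold nodeSq
    exact Finset.sum_le_sum fun i _ =>
      le_add_of_nonneg_right (mul_nonneg (hrpownn i _) (sq_nonneg _))
  have hN2f : ∀ t ∈ Set.Ioo (0:ℝ) T,
      hNormh e μ l (U2f t) ≤ Real.sqrt (8 * (Kint * (SS1+SS2))) := by
    intro t ht
    obtain ⟨n, h1, h2, htIoc⟩ := hcov t ht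
    rw [hval2 n h1 h2 t htIoc]
    refine Real.sqrt_le_sqrt (le_trans ?_ (hinterior n h1 h2 t htIoc))
    unfold nodeSq
    exact Finset.sum_le_sum fun i _ =>
      le_add_of_nonneg_left (mul_nonneg (hrpownn i _) (sq_nonneg _))
  have hSS1le : SS1 ≤ Real.sqrt (8 * (Kint * (SS1+SS2))) := by
    rw [hSS1def]
    refine csSup_le ⟨_, ⟨T/2, hTmem, rfl⟩⟩ ?_
    rintro _ ⟨t, ht, rfl⟩
    exact hN1f t ht
  have hSS2le : SS2 ≤ Real.sqrt (8 * (Kint * (SS1+SS2))) := by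
    rw [hSS2def]
    refine csSup_le ⟨_, ⟨T/2, hTmem, rfl⟩⟩ ?_
    rintro _ ⟨t, ht, rfl⟩
    exact hN2f t ht
  -- bootstrap
  have hsum2 : SS1 + SS2 ≤ 2 * Real.sqrt (8 * (Kint * (SS1+SS2))) := by linarith
  have h8nn : (0:ℝ) ≤ 8 * (Kint * (SS1+SS2)) := by linarith [hKSnn]
  have hsq : (SS1+SS2)^2 ≤ 4 * (8 * (Kint * (SS1+SS2))) := by
    nlinarith [Real.sq_sqrt h8nn, Real.sqrt_nonneg (8 * (Kint * (SS1+SS2))), hsum2,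
      add_nonneg hSS1nn hSS2nn]
  show SS1 + SS2 ≤ 32 * Kint
  rcases eq_or_lt_of_le (add_nonneg hSS1nn hSS2nn) with h0 | hpos
  · rw [← h0]
    exact mul_nonneg (by norm_num) hKintnn
  · refine le_of_mul_le_mul_right ?_ hpos
    calc (SS1 + SS2) * (SS1 + SS2) = (SS1 + SS2) ^ 2 := (pow_two _).symm
      _ ≤ 4 * (8 * (Kint * (SS1 + SS2))) := hsq
      _ = 32 * Kint * (SS1 + SS2) := by ring
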